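/- arXiv:0710.3493 — 3 statements merged into one kernel-verified Lean document; each statement's English description precedes it below -/
import Mathlib

section
/- In the Schröder case (p_1 > 0), with τ := −log p_1 / log μ, one has P{W < 1} > 0 and, for all 0 < ε < 1, P{W < ε} ≥ p_1 · P{W < 1} · ε^τ. -/
open MeasureTheory ProbabilityTheory Filter
open scoped ENNReal

/-- Composing a ℕ-valued measurable index with a measurable family is measurable. -/
lemma gw_meas_nat_comp {α : Type*} [MeasurableSpace α] {f : α → ℕ} {G : ℕ → α → ℕ}
    (hf : Measurable f) (hG : ∀ k, Measurable (G k)) : Measurable fun x => G (f x) x := by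
  apply measurable_to_countable'
  intro m
  have : (fun x => G (f x) x) ⁻¹' {m} = ⋃ k, (f ⁻¹' {k} ∩ (G k) ⁻¹' {m}) := by
    ext x
    simp only [Set.mem_preimage, Set.mem_singleton_iff, Set.mem_iUnion, Set.mem_inter_iff]
    constructor
    · intro h; exact ⟨f x, rfl, h⟩
    · rintro ⟨k, hk, h⟩; rw [hk]; exact h
  rw [this]
  exact MeasurableSet.iUnion fun k =>
    (hf (measurableSet_singleton k)).inter (hG k (measurableSet_singleton m))

/-- Real limsup of a nonnegative sequence equals `toReal` of the `ℝ≥0∞` limsup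
(including the junk cases). -/
lemma gw_limsup_eq_toReal_limsup (u : ℕ → ℝ) (hu : ∀ n, 0 ≤ u n) :
    Filter.limsup u Filter.atTop
      = (Filter.limsup (fun n => ENNReal.ofReal (u n)) Filter.atTop).toReal := by
  set L := Filter.limsup (fun n => ENNReal.ofReal (u n)) Filter.atTop with hLdef
  have hmem_nonneg : ∀ a : ℝ, (∀ᶠ n in atTop, u n ≤ a) → 0 ≤ a := by
    intro a ha
    obtain ⟨n, hn⟩ := ha.exists
    exact (hu n).trans hn
  have hmem_le : ∀ a : ℝ, (∀ᶠ n in atTop, u n ≤ a) → L ≤ ENNReal.ofReal a := by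
    intro a ha
    exact limsup_le_of_le (by isBoundedDefault)
      (ha.mono fun n hn => ENNReal.ofReal_le_ofReal hn)
  by_cases hL : L = ⊤
  · rw [hL, ENNReal.toReal_top, Filter.limsup_eq]
    refine (congrArg sInf (?_ : _ = (∅ : Set ℝ))).trans Real.sInf_empty
    rw [Set.eq_empty_iff_forall_notMem]
    intro a ha
    have := hmem_le a ha
    rw [hL] at this
    exact (ENNReal.ofReal_lt_top.not_ge this).elim
  · set l := L.toReal with hl
    have hl0 : 0 ≤ l := ENNReal.toReal_nonneg
    have hLl : L = ENNReal.ofReal l := (ENNReal.ofReal_toReal hL).symm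
    have hSmem : ∀ ε : ℝ, 0 < ε → (∀ᶠ n in atTop, u n ≤ l + ε) := by
      intro ε hε
      have h1 : L < ENNReal.ofReal (l + ε) := by
        rw [hLl]
        exact (ENNReal.ofReal_lt_ofReal_iff (by linarith)).2 (by linarith)
      have := Filter.eventually_lt_of_limsup_lt h1
      exact this.mono fun n hn => by
        have := (ENNReal.ofReal_lt_ofReal_iff_of_nonneg (hu n)).1 hn
        linarith
    rw [Filter.limsup_eq]
    have hbdd : BddBelow {a : ℝ | ∀ᶠ n in atTop, u n ≤ a} :=
      ⟨0, fun a ha => hmem_nonneg a ha⟩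
    have hne : {a : ℝ | ∀ᶠ n in atTop, u n ≤ a}.Nonempty := ⟨l + 1, hSmem 1 one_pos⟩
    apply le_antisymm
    · apply le_of_forall_pos_le_add
      intro ε hε
      exact csInf_le hbdd (hSmem ε hε)
    · apply le_csInf hne
      intro a ha
      have h1 := hmem_le a ha
      have h2 : 0 ≤ a := hmem_nonneg a ha
      calc l = L.toReal := rfl
        _ ≤ (ENNReal.ofReal a).toReal := ENNReal.toReal_mono ENNReal.ofReal_ne_top h1
        _ = a := ENNReal.toReal_ofReal h2

/-- Canonical Galton–Watson population functional on sequence space. -/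
def gwZseq : ℕ → (ℕ × ℕ → ℕ) → ℕ
  | 0, _ => 1
  | (n+1), x => ∑ i ∈ Finset.range (gwZseq n x), x (n, i)

lemma gwZseq_measurable (n : ℕ) : Measurable (gwZseq n) := by
  induction n with
  | zero => exact measurable_const
  | succ n ih =>
    have : (gwZseq (n+1))
        = fun x => (fun k (x : ℕ × ℕ → ℕ) => ∑ i ∈ Finset.range k, x (n, i)) (gwZseq n x) x := rfl
    rw [this]
    exact gw_meas_nat_comp (G := fun k x => ∑ i ∈ Finset.range k, x (n, i)) ih
      fun k => Finset.measurable_sum _ fun i _ => measurable_pi_apply _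

/-- The (extended-real-valued) Galton–Watson limsup functional. -/
noncomputable def gwFseq (c : ℝ≥0∞) (x : ℕ × ℕ → ℕ) : ℝ≥0∞ :=
  Filter.limsup (fun n => (gwZseq n x : ℝ≥0∞) / c ^ n) Filter.atTop

lemma gwFseq_measurable (c : ℝ≥0∞) : Measurable (gwFseq c) := by
  apply Measurable.limsup
  intro n
  exact (measurable_from_nat.comp (gwZseq_measurable n)).div_const _

theorem gw_schroeder_lower_bound
    {Ω : Type*} [MeasurableSpace Ω] (P : Measure Ω) [IsProbabilityMeasure P]
    (p : ℕ → ℝ) (N : ℕ → ℕ → Ω → ℕ) (Z : ℕ → Ω → ℕ) (μ : ℝ)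
    (hp0 : p 0 = 0) (hpnn : ∀ k, 0 ≤ p k) (hpsum : HasSum p 1)
    (hnondeg : ∀ k, p k < 1)
    (hNmeas : ∀ n i, Measurable (N n i))
    (hNdist : ∀ n i k, (P {ω | N n i ω = k}).toReal = p k)
    (hNindep : iIndepFun (fun ni : ℕ × ℕ => N ni.1 ni.2) P)
    (hmean : HasSum (fun k : ℕ => (k : ℝ) * p k) μ) (hμ : 1 < μ)
    (hNlogN : Summable (fun k : ℕ => (k : ℝ) * Real.log k * p k))
    (hZ0 : ∀ ω, Z 0 ω = 1)
    (hZrec : ∀ n ω, Z (n + 1) ω = ∑ i ∈ Finset.range (Z n ω), N n i ω)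
    (W : Ω → ℝ)
    (hW : ∀ ω, W ω = Filter.limsup (fun n => (Z n ω : ℝ) / μ ^ n) Filter.atTop)
    (hp1 : 0 < p 1) :
    0 < (P {ω | W ω < 1}).toReal ∧
    ∀ ε : ℝ, 0 < ε → ε < 1 →
      p 1 * (P {ω | W ω < 1}).toReal * ε ^ (-Real.log (p 1) / Real.log μ) ≤ (P {ω | W ω < ε}).toReal := by
  classical
  have hμ0 : (0:ℝ) < μ := lt_trans one_pos hμ
  set c : ℝ≥0∞ := ENNReal.ofReal μ with hc
  have hc0 : c ≠ 0 := (ENNReal.ofReal_pos.2 hμ0).ne'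
  have hct : c ≠ ⊤ := ENNReal.ofReal_ne_top
  -- atoms
  have hatom : ∀ n i k, P ((fun ω => N n i ω) ⁻¹' {k}) = ENNReal.ofReal (p k) := by
    intro n i k
    have h1 : ((fun ω => N n i ω) ⁻¹' {k}) = {ω | N n i ω = k} := rfl
    rw [h1, ← hNdist n i k, ENNReal.ofReal_toReal (measure_ne_top P _)]
  -- product formula for injectively indexed subfamilies
  have hprod : ∀ {ι' : Type} (f : ι' → ℕ × ℕ), Function.Injective f →
      ∀ (S : Finset ι') (g : ι' → ℕ),
      P (⋂ j ∈ S, (fun ω => N (f j).1 (f j).2 ω) ⁻¹' {g j})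
        = ∏ j ∈ S, ENNReal.ofReal (p (g j)) := by
    intro ι' f hf S g
    cases isEmpty_or_nonempty ι' with
    | inl h =>
      have : S = ∅ := Finset.eq_empty_of_isEmpty S
      simp [this]
    | inr h =>
      have key := hNindep.measure_inter_preimage_eq_mul (S.image f)
        (sets := fun i => {g (Function.invFun f i)}) (fun i _ => measurableSet_singleton _)
      have hinv : ∀ j, Function.invFun f (f j) = j := Function.leftInverse_invFun hf
      have h1 : (⋂ i ∈ S.image f, (fun ni : ℕ × ℕ => N ni.1 ni.2) i ⁻¹' {g (Function.invFun f i)})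
          = ⋂ j ∈ S, (fun ω => N (f j).1 (f j).2 ω) ⁻¹' {g j} := by
        rw [Finset.set_biInter_finset_image]
        exact Set.iInter₂_congr fun j hj => by rw [hinv j]
      have h2 : (∏ i ∈ S.image f, P ((fun ni : ℕ × ℕ => N ni.1 ni.2) i ⁻¹' {g (Function.invFun f i)}))
          = ∏ j ∈ S, ENNReal.ofReal (p (g j)) := by
        rw [Finset.prod_image (fun x _ y _ h' => hf h')]
        exact Finset.prod_congr rfl fun j hj => by rw [hinv j, hatom]
      rw [← h1, key, h2]
  -- cylinder values
  have hcyl : ∀ (e : ℕ × ℕ → ℕ × ℕ), Function.Injective e → ∀ (S : Finset (ℕ × ℕ))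
      (T : Set (∀ i : S, ℕ)),
      P ((fun ω => fun j : ℕ × ℕ => N (e j).1 (e j).2 ω) ⁻¹' cylinder S T)
        = ∑' b : T, ∏ j : S, ENNReal.ofReal (p (b.1 j)) := by
    intro e he S T
    have hg : Measurable (fun ω => (fun j : S => N (e j.1).1 (e j.1).2 ω)) :=
      measurable_pi_lambda _ fun j => hNmeas _ _
    have hpre : (fun ω => fun j : ℕ × ℕ => N (e j).1 (e j).2 ω) ⁻¹' cylinder S T
        = (fun ω => (fun j : S => N (e j.1).1 (e j.1).2 ω)) ⁻¹' T := rfl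
    rw [hpre, ← tsum_measure_preimage_singleton (Set.to_countable T)
      (fun b _ => hg (measurableSet_singleton b))]
    apply tsum_congr
    intro b
    have hsing : (fun ω => (fun j : S => N (e j.1).1 (e j.1).2 ω)) ⁻¹' {b.1}
        = ⋂ j ∈ (Finset.univ : Finset S),
            (fun ω => N ((e ∘ Subtype.val) j).1 ((e ∘ Subtype.val) j).2 ω) ⁻¹' {b.1 j} := by
      ext ω
      simp only [Set.mem_preimage, Set.mem_singleton_iff, funext_iff, Set.mem_iInter,
        Finset.mem_univ, forall_true_left, Function.comp]
    rw [hsing, hprod (e ∘ Subtype.val) (he.comp Subtype.coe_injective) Finset.univ (fun j => b.1 j)]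
  -- pushforward under injective relabeling does not depend on the relabeling
  have hmapeq : ∀ (e : ℕ × ℕ → ℕ × ℕ), Function.Injective e → ∀ (C : Set (ℕ × ℕ → ℕ)),
      MeasurableSet C →
      P ((fun ω => fun j : ℕ × ℕ => N (e j).1 (e j).2 ω) ⁻¹' C)
        = P ((fun ω => fun j : ℕ × ℕ => N j.1 j.2 ω) ⁻¹' C) := by
    intro e he C hC
    have hΦe : Measurable (fun ω => fun j : ℕ × ℕ => N (e j).1 (e j).2 ω) :=
      measurable_pi_lambda _ fun j => hNmeas _ _
    have hΦ : Measurable (fun ω => fun j : ℕ × ℕ => N j.1 j.2 ω) :=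
      measurable_pi_lambda _ fun j => hNmeas _ _
    have hP1 : IsProbabilityMeasure (Measure.map (fun ω => fun j : ℕ × ℕ => N (e j).1 (e j).2 ω) P) :=
      Measure.isProbabilityMeasure_map hΦe.aemeasurable
    have hP2 : IsProbabilityMeasure (Measure.map (fun ω => fun j : ℕ × ℕ => N j.1 j.2 ω) P) :=
      Measure.isProbabilityMeasure_map hΦ.aemeasurable
    have hmm : Measure.map (fun ω => fun j : ℕ × ℕ => N (e j).1 (e j).2 ω) P
        = Measure.map (fun ω => fun j : ℕ × ℕ => N j.1 j.2 ω) P := by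
      refine ext_of_generate_finite _ generateFrom_measurableCylinders.symm
        isPiSystem_measurableCylinders (fun s hs => ?_) ?_
      · obtain ⟨S, T, hT, rfl⟩ := (mem_measurableCylinders s).1 hs
        rw [Measure.map_apply hΦe hT.cylinder, Measure.map_apply hΦ hT.cylinder]
        exact (hcyl e he S T).trans ((hcyl (fun j => j) (fun a b h' => h') S T).symm)
      · simp [hP1.measure_univ, hP2.measure_univ]
    rw [← Measure.map_apply hΦe hC, ← Measure.map_apply hΦ hC, hmm]
  -- representation of W
  have hWrep : ∀ ω, W ω = (gwFseq c (fun j : ℕ × ℕ => N j.1 j.2 ω)).toReal := by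
    intro ω
    have hZ : ∀ m, Z m ω = gwZseq m (fun j : ℕ × ℕ => N j.1 j.2 ω) := by
      intro m
      induction m with
      | zero => simpa [gwZseq] using hZ0 ω
      | succ m ih =>
        rw [hZrec, ih]
        rfl
    rw [hW ω, gw_limsup_eq_toReal_limsup _ (fun m => by positivity)]
    have hfun : (fun m => ENNReal.ofReal ((Z m ω : ℝ) / μ ^ m))
        = fun m => ((gwZseq m (fun j : ℕ × ℕ => N j.1 j.2 ω) : ℝ≥0∞)) / c ^ m := by
      funext m
      rw [ENNReal.ofReal_div_of_pos (pow_pos hμ0 m), ENNReal.ofReal_natCast,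
        ENNReal.ofReal_pow hμ0.le, hZ m]
    rw [hfun]
    rfl
  -- THE KEY INEQUALITY
  have key : ∀ (n : ℕ) (t : ℝ),
      ENNReal.ofReal (p 1) ^ n * P {ω | W ω < t} ≤ P {ω | W ω < (μ ^ n)⁻¹ * t} := by
    intro n t
    set Ct : Set (ℕ × ℕ → ℕ) := {x | (gwFseq c x).toReal < t} with hCt
    have hCtm : MeasurableSet Ct :=
      measurableSet_lt (ENNReal.measurable_toReal.comp (gwFseq_measurable c)) measurable_const
    set A : Set Ω := ⋂ k ∈ Finset.range n, (fun ω => N k 0 ω) ⁻¹' {1} with hA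
    set Φn : Ω → ℕ × ℕ → ℕ := fun ω j => N (n + j.1) j.2 ω with hΦn
    set B : Set Ω := Φn ⁻¹' Ct with hB
    -- A ∩ B ⊆ {W < μ^{-n} t}
    have hAB : A ∩ B ⊆ {ω | W ω < (μ ^ n)⁻¹ * t} := by
      rintro ω ⟨hωA, hωB⟩
      have hA1 : ∀ k, k < n → N k 0 ω = 1 := by
        intro k hk
        have := Set.mem_iInter₂.1 hωA k (Finset.mem_range.2 hk)
        simpa using this
      have hZ1 : ∀ k, k ≤ n → Z k ω = 1 := by
        intro k hk
        induction k with
        | zero => exact hZ0 ω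
        | succ k ih =>
          rw [hZrec, ih (Nat.le_of_succ_le hk)]
          simpa using hA1 k (Nat.lt_of_succ_le hk)
      have hZshift : ∀ m, Z (n + m) ω = gwZseq m (Φn ω) := by
        intro m
        induction m with
        | zero => simpa [gwZseq] using hZ1 n le_rfl
        | succ m ih =>
          have : n + (m + 1) = (n + m) + 1 := by omega
          rw [this, hZrec, ih]
          rfl
      have hWω : W ω = (μ ^ n)⁻¹ * (gwFseq c (Φn ω)).toReal := by
        rw [hW ω, gw_limsup_eq_toReal_limsup _ (fun m => by positivity)]
        have h1 : (fun m => ENNReal.ofReal ((Z m ω : ℝ) / μ ^ m))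
            = fun m => (Z m ω : ℝ≥0∞) / c ^ m := by
          funext m
          rw [ENNReal.ofReal_div_of_pos (pow_pos hμ0 m), ENNReal.ofReal_natCast,
            ENNReal.ofReal_pow hμ0.le]
        rw [h1]
        have h2 : Filter.limsup (fun m => (Z m ω : ℝ≥0∞) / c ^ m) atTop
            = (c ^ n)⁻¹ * gwFseq c (Φn ω) := by
          rw [← limsup_nat_add (fun m => (Z m ω : ℝ≥0∞) / c ^ m) n]
          have h3 : (fun k => (Z (k + n) ω : ℝ≥0∞) / c ^ (k + n))
              = fun k => (c ^ n)⁻¹ * ((gwZseq k (Φn ω) : ℝ≥0∞) / c ^ k) := by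
            funext k
            rw [Nat.add_comm k n, hZshift k, pow_add]
            rw [div_eq_mul_inv, div_eq_mul_inv,
              ENNReal.mul_inv (Or.inl (pow_ne_zero n hc0)) (Or.inl (ENNReal.pow_ne_top hct))]
            ring
          rw [h3, ENNReal.limsup_const_mul_of_ne_top (ENNReal.inv_ne_top.2 (pow_ne_zero n hc0))]
          rfl
        rw [h2, ENNReal.toReal_mul, ENNReal.toReal_inv, ENNReal.toReal_pow,
          ENNReal.toReal_ofReal hμ0.le]
      have hWB : (gwFseq c (Φn ω)).toReal < t := hωB
      have : W ω < (μ ^ n)⁻¹ * t := by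
        rw [hWω]
        exact mul_lt_mul_of_pos_left hWB (by positivity)
      exact this
    -- P A
    have hinj1 : Function.Injective (fun k : ℕ => ((k, 0) : ℕ × ℕ)) :=
      fun a b h' => congrArg Prod.fst h'
    have hPA : P A = ENNReal.ofReal (p 1) ^ n := by
      have h := hprod (fun k : ℕ => ((k, 0) : ℕ × ℕ)) hinj1 (Finset.range n) (fun _ => 1)
      simp only [Finset.prod_const, Finset.card_range] at h
      exact h
    -- P B
    have hinj2 : Function.Injective (fun j : ℕ × ℕ => ((n + j.1, j.2) : ℕ × ℕ)) := by
      intro a b h'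
      have h1 := congrArg Prod.fst h'
      have h2 := congrArg Prod.snd h'
      simp only at h1 h2
      exact Prod.ext (by omega) h2
    have hPB : P B = P {ω | W ω < t} := by
      have h1 : {ω | W ω < t} = (fun ω => fun j : ℕ × ℕ => N j.1 j.2 ω) ⁻¹' Ct := by
        ext ω
        simp only [Set.mem_setOf_eq, Set.mem_preimage, hCt, hWrep ω]
      rw [h1]
      exact hmapeq (fun j : ℕ × ℕ => ((n + j.1, j.2) : ℕ × ℕ)) hinj2 Ct hCtm
    -- independence of A and B
    have hindepAB : P (A ∩ B) = P A * P B := by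
      set M := fun j : ℕ × ℕ =>
        MeasurableSpace.comap (fun ω => N j.1 j.2 ω) inferInstance with hM
      have h_le : ∀ j : ℕ × ℕ, M j ≤ _ := fun j => (hNmeas j.1 j.2).comap_le
      have hInd := indep_biSup_compl h_le hNindep.iIndep {j : ℕ × ℕ | j.1 < n}
      refine (Indep_iff _ _ _).1 hInd A B ?_ ?_
      · refine MeasurableSet.biInter (Set.to_countable _) fun k hk => ?_
        have hmem : ((k, 0) : ℕ × ℕ) ∈ {j : ℕ × ℕ | j.1 < n} := Finset.mem_range.1 hk
        have h1 : MeasurableSet[M ((k, 0) : ℕ × ℕ)] ((fun ω => N k 0 ω) ⁻¹' {1}) :=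
          ⟨{1}, measurableSet_singleton 1, rfl⟩
        exact (le_biSup M hmem) _ h1
      · have hΦnM : Measurable[⨆ j ∈ {j : ℕ × ℕ | j.1 < n}ᶜ, M j] Φn := by
          simp_rw [measurable_iff_comap_le, MeasurableSpace.pi, MeasurableSpace.comap_iSup,
            MeasurableSpace.comap_comp, Function.comp_def, iSup_le_iff]
          intro j
          have hmem : ((n + j.1, j.2) : ℕ × ℕ) ∈ {j : ℕ × ℕ | j.1 < n}ᶜ := by
            simp [Set.mem_setOf_eq]
          exact le_biSup M hmem
        exact hΦnM hCtm
    calc ENNReal.ofReal (p 1) ^ n * P {ω | W ω < t} = P A * P B := by rw [hPA, hPB]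
      _ = P (A ∩ B) := hindepAB.symm
      _ ≤ P {ω | W ω < (μ ^ n)⁻¹ * t} := measure_mono hAB
  -- PART 1
  have hex : ∃ m : ℕ, P {ω | W ω < μ ^ m} ≠ 0 := by
    by_contra h
    push_neg at h
    have huniv : (Set.univ : Set Ω) = ⋃ m : ℕ, {ω | W ω < μ ^ m} := by
      ext ω
      simp only [Set.mem_univ, true_iff, Set.mem_iUnion, Set.mem_setOf_eq]
      exact pow_unbounded_of_one_lt (W ω) hμ
    have hle := measure_iUnion_le (μ := P) (s := fun m : ℕ => {ω | W ω < μ ^ m})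
    rw [← huniv] at hle
    simp only [h, tsum_zero, nonpos_iff_eq_zero, measure_univ] at hle
    exact one_ne_zero hle
  obtain ⟨m, hm⟩ := hex
  have h1 : P {ω | W ω < 1} ≠ 0 := by
    have hk := key m (μ ^ m)
    rw [inv_mul_cancel₀ (pow_pos hμ0 m).ne'] at hk
    intro h0
    rw [h0] at hk
    exact (mul_ne_zero (pow_ne_zero m (ENNReal.ofReal_pos.2 hp1).ne') hm)
      (le_antisymm hk zero_le)
  have hpos1 : 0 < (P {ω | W ω < 1}).toReal := ENNReal.toReal_pos h1 (measure_ne_top P _)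
  refine ⟨hpos1, fun ε hε hε1 => ?_⟩
  -- PART 2
  have hlogμ : 0 < Real.log μ := Real.log_pos hμ
  have hlogp1 : Real.log (p 1) < 0 := Real.log_neg hp1 (hnondeg 1)
  set x := Real.log ε⁻¹ / Real.log μ with hx
  have hx0 : 0 < x := div_pos (Real.log_pos ((one_lt_inv₀ hε).2 hε1)) hlogμ
  set n := ⌈x⌉₊ with hn
  have hxn : x ≤ (n : ℝ) := Nat.le_ceil x
  have hnx : (n : ℝ) < x + 1 := Nat.ceil_lt_add_one hx0.le
  have ha : (μ ^ n)⁻¹ ≤ ε := by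
    rw [inv_le_comm₀ (pow_pos hμ0 n) hε]
    have h2 : Real.log ε⁻¹ ≤ Real.log (μ ^ n) := by
      rw [Real.log_pow]
      calc Real.log ε⁻¹ = x * Real.log μ := by rw [hx, div_mul_cancel₀ _ hlogμ.ne']
        _ ≤ (n : ℝ) * Real.log μ := mul_le_mul_of_nonneg_right hxn hlogμ.le
    exact (Real.log_le_log_iff (inv_pos.2 hε) (pow_pos hμ0 n)).1 h2
  have hb : p 1 * ε ^ (-Real.log (p 1) / Real.log μ) ≤ p 1 ^ n := by
    have hrp : 0 < ε ^ (-Real.log (p 1) / Real.log μ) := Real.rpow_pos_of_pos hε _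
    rw [← Real.log_le_log_iff (by positivity) (pow_pos hp1 n)]
    rw [Real.log_mul hp1.ne' hrp.ne', Real.log_rpow hε, Real.log_pow]
    have hτ : -Real.log (p 1) / Real.log μ * Real.log ε = x * Real.log (p 1) := by
      rw [hx, Real.log_inv]
      ring
    rw [hτ]
    have h5 : (x + 1) * Real.log (p 1) ≤ (n : ℝ) * Real.log (p 1) :=
      mul_le_mul_of_nonpos_right hnx.le hlogp1.le
    nlinarith
  have hk := key n 1
  rw [mul_one] at hk
  have hsub : {ω | W ω < (μ ^ n)⁻¹} ⊆ {ω | W ω < ε} := fun ω hω => lt_of_lt_of_le hω ha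
  have hchain : ENNReal.ofReal (p 1) ^ n * P {ω | W ω < 1} ≤ P {ω | W ω < ε} :=
    hk.trans (measure_mono hsub)
  have hfin := ENNReal.toReal_mono (measure_ne_top P _) hchain
  rw [ENNReal.toReal_mul, ENNReal.toReal_pow, ENNReal.toReal_ofReal (hpnn 1)] at hfin
  calc p 1 * (P {ω | W ω < 1}).toReal * ε ^ (-Real.log (p 1) / Real.log μ)
      = (p 1 * ε ^ (-Real.log (p 1) / Real.log μ)) * (P {ω | W ω < 1}).toReal := by ring
    _ ≤ p 1 ^ n * (P {ω | W ω < 1}).toReal :=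
        mul_le_mul_of_nonneg_right hb ENNReal.toReal_nonneg
    _ ≤ (P {ω | W ω < ε}).toReal := hfin
end

section
/- For every k ≥ 0 the martingale limit satisfies the branching self-similarity: if (W_i : i ≥ 1) are i.i.d. random variables with the distribution of W, independent of Z_k, then W has the same distribution as μ^{−k} Σ_{i=1}^{Z_k} W_i. -/
open MeasureTheory ProbabilityTheory Filter
open scoped ENNReal NNReal Topology

namespace GWaux

open Set ENNReal

variable {Ω : Type*} {m0 : MeasurableSpace Ω} {P : Measure Ω}

lemma measurable_cases {m : MeasurableSpace Ω} {β : Type*} [MeasurableSpace β]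
    {X : Ω → ℕ} (hX : Measurable[m] X) {g : ℕ → Ω → β} (hg : ∀ l, Measurable[m] (g l)) :
    Measurable[m] fun ω => g (X ω) ω := by
  intro s hs
  have h : (fun ω => g (X ω) ω) ⁻¹' s = ⋃ l, ({ω | X ω = l} ∩ g l ⁻¹' s) := by
    ext ω
    simp only [Set.mem_preimage, Set.mem_iUnion, Set.mem_inter_iff, Set.mem_setOf_eq]
    exact ⟨fun h => ⟨X ω, rfl, h⟩, by rintro ⟨l, rfl, h⟩; exact h⟩
  rw [h]
  exact MeasurableSet.iUnion fun l => (hX (measurableSet_singleton l)).inter (hg l hs)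

variable {ι κ : Type*} [mκ : MeasurableSpace κ]

lemma lintegral_mul_of_indep [IsProbabilityMeasure P] {Y : ι → Ω → κ}
    (hYmeas : ∀ i, Measurable (Y i))
    (hYindep : iIndepFun Y P) (t : Set ι)
    {g h : Ω → ℝ≥0∞}
    (hg : Measurable[⨆ i ∈ t, MeasurableSpace.comap (Y i) mκ] g)
    (hh : Measurable[⨆ i ∈ tᶜ, MeasurableSpace.comap (Y i) mκ] h) :
    ∫⁻ ω, g ω * h ω ∂P = (∫⁻ ω, g ω ∂P) * ∫⁻ ω, h ω ∂P := by
  have hle : ∀ i, MeasurableSpace.comap (Y i) mκ ≤ m0 := fun i => (hYmeas i).comap_le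
  have hsle : ∀ u : Set ι, (⨆ i ∈ u, MeasurableSpace.comap (Y i) mκ) ≤ m0 :=
    fun u => iSup₂_le fun i _ => hle i
  exact lintegral_mul_eq_lintegral_mul_lintegral_of_independent_measurableSpace
    (hsle t) (hsle tᶜ) (indep_biSup_compl hle hYindep.iIndep t) hg hh

lemma setLIntegral_indep [IsProbabilityMeasure P] {Y : ι → Ω → κ}
    (hYmeas : ∀ i, Measurable (Y i))
    (hYindep : iIndepFun Y P) (t : Set ι)
    {g : Ω → ℝ≥0∞}
    (hg : Measurable[⨆ i ∈ t, MeasurableSpace.comap (Y i) mκ] g)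
    {C : Set Ω} (hC : MeasurableSet[⨆ i ∈ tᶜ, MeasurableSpace.comap (Y i) mκ] C) :
    ∫⁻ ω in C, g ω ∂P = (∫⁻ ω, g ω ∂P) * P C := by
  have hsle : ∀ u : Set ι, (⨆ i ∈ u, MeasurableSpace.comap (Y i) mκ) ≤ m0 :=
    fun u => iSup₂_le fun i _ => (hYmeas i).comap_le
  have hCm : MeasurableSet C := hsle tᶜ C hC
  have h1 : ∫⁻ ω in C, g ω ∂P = ∫⁻ ω, g ω * C.indicator (fun _ => 1) ω ∂P := by
    rw [← lintegral_indicator hCm]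
    refine lintegral_congr fun ω => ?_
    by_cases hω : ω ∈ C <;> simp [hω]
  rw [h1, lintegral_mul_of_indep hYmeas hYindep t hg
      (measurable_const.indicator hC)]
  congr 1
  rw [lintegral_indicator hCm]
  simp

lemma lintegral_split (μ' : Measure Ω) {X : Ω → ℕ} (hX : Measurable X) (g : Ω → ℝ≥0∞) :
    ∫⁻ ω, g ω ∂μ' = ∑' l : ℕ, ∫⁻ ω in {ω | X ω = l}, g ω ∂μ' := by
  have hu : (⋃ l : ℕ, {ω | X ω = l}) = Set.univ := by
    ext ω; simp
  have hd : Pairwise (Function.onFun Disjoint fun l : ℕ => {ω | X ω = l}) := by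
    intro i j hij
    simp only [Function.onFun, Set.disjoint_left, Set.mem_setOf_eq]
    rintro ω rfl
    exact fun h => hij h
  rw [← setLIntegral_univ, ← hu]
  exact lintegral_iUnion (fun l => hX (measurableSet_singleton l)) hd g

lemma map_eq_of_moments [IsProbabilityMeasure P] {a b : Ω → ℝ}
    (ha : Measurable a) (hb : Measurable b)
    (ha01 : ∀ ω, a ω ∈ Set.Icc (0:ℝ) 1) (hb01 : ∀ ω, b ω ∈ Set.Icc (0:ℝ) 1)
    (hmom : ∀ n : ℕ, ∫ ω, a ω ^ n ∂P = ∫ ω, b ω ^ n ∂P) :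
    P.map a = P.map b := by
  have hint : ∀ {c : Ω → ℝ}, Measurable c → (∀ ω, c ω ∈ Set.Icc (0:ℝ) 1) →
      ∀ g : ℝ → ℝ, Continuous g → Integrable (fun ω => g (c ω)) P := by
    intro c hc hc01 g hg
    obtain ⟨C, hC⟩ := (isCompact_Icc (a := (0:ℝ)) (b := 1)).exists_bound_of_continuousOn
      hg.continuousOn
    exact Integrable.mono' (integrable_const C)
      ((hg.measurable.comp hc).aestronglyMeasurable)
      (Filter.Eventually.of_forall fun ω => hC _ (hc01 ω))
  have key : ∀ g : ℝ → ℝ, Continuous g → ∫ ω, g (a ω) ∂P = ∫ ω, g (b ω) ∂P := by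
    intro g hg
    refine eq_of_forall_dist_le fun ε hε => ?_
    obtain ⟨q, hq⟩ := exists_polynomial_near_of_continuousOn 0 1 g hg.continuousOn (ε/2)
      (by linarith)
    have hq_eq : ∫ ω, q.eval (a ω) ∂P = ∫ ω, q.eval (b ω) ∂P := by
      simp_rw [Polynomial.eval_eq_sum_range]
      rw [integral_finset_sum _ fun j _ =>
          (hint ha ha01 _ (continuous_pow j)).const_mul (q.coeff j),
        integral_finset_sum _ fun j _ =>
          (hint hb hb01 _ (continuous_pow j)).const_mul (q.coeff j)]
      refine Finset.sum_congr rfl fun j _ => ?_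
      rw [integral_const_mul, integral_const_mul, hmom j]
    have hest : ∀ {c : Ω → ℝ}, Measurable c → (∀ ω, c ω ∈ Set.Icc (0:ℝ) 1) →
        dist (∫ ω, g (c ω) ∂P) (∫ ω, q.eval (c ω) ∂P) ≤ ε/2 := by
      intro c hc hc01
      have hgint := hint hc hc01 g hg
      have hqint := hint hc hc01 _ q.continuous_aeval
      have hqint' : Integrable (fun ω => q.eval (c ω)) P := by
        simpa [Polynomial.aeval_def, Polynomial.eval₂_eq_eval_map] using hqint
      rw [dist_eq_norm, ← integral_sub hgint hqint']
      calc ‖∫ ω, (g (c ω) - q.eval (c ω)) ∂P‖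
          ≤ ∫ ω, ‖g (c ω) - q.eval (c ω)‖ ∂P := norm_integral_le_integral_norm _
        _ ≤ ∫ _ω, (ε/2) ∂P := by
            refine integral_mono (hgint.sub hqint').norm (integrable_const _) fun ω => ?_
            rw [Real.norm_eq_abs, abs_sub_comm]
            exact (hq _ (hc01 ω)).le
        _ = ε/2 := by simp
    calc dist (∫ ω, g (a ω) ∂P) (∫ ω, g (b ω) ∂P)
        ≤ dist (∫ ω, g (a ω) ∂P) (∫ ω, q.eval (a ω) ∂P)
          + dist (∫ ω, q.eval (a ω) ∂P) (∫ ω, g (b ω) ∂P) := dist_triangle _ _ _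
      _ ≤ ε/2 + ε/2 := by
          refine add_le_add (hest ha ha01) ?_
          rw [hq_eq, dist_comm]
          exact hest hb hb01
      _ = ε := by ring
  haveI : IsProbabilityMeasure (P.map a) := Measure.isProbabilityMeasure_map ha.aemeasurable
  refine ext_of_forall_lintegral_eq_of_IsFiniteMeasure fun f => ?_
  have hfm : Measurable fun x : ℝ => (f x : ℝ≥0∞) :=
    measurable_coe_nnreal_ennreal.comp f.continuous.measurable
  rw [lintegral_map hfm ha, lintegral_map hfm hb,
    lintegral_coe_eq_integral (fun ω => f (a ω))
      (hint ha ha01 _ (NNReal.continuous_coe.comp f.continuous)),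
    lintegral_coe_eq_integral (fun ω => f (b ω))
      (hint hb hb01 _ (NNReal.continuous_coe.comp f.continuous))]
  exact congrArg ENNReal.ofReal (key (fun x => (f x : ℝ)) (NNReal.continuous_coe.comp f.continuous))

end GWaux

open GWaux

theorem gw_branching_self_similarity
    {Ω : Type*} [MeasurableSpace Ω] (P : Measure Ω) [IsProbabilityMeasure P]
    (p : ℕ → ℝ) (N : ℕ → ℕ → Ω → ℕ) (Z : ℕ → Ω → ℕ) (μ : ℝ)
    (hp0 : p 0 = 0) (hpnn : ∀ k, 0 ≤ p k) (hpsum : HasSum p 1)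
    (hnondeg : ∀ k, p k < 1)
    (hNmeas : ∀ n i, Measurable (N n i))
    (hNdist : ∀ n i k, (P {ω | N n i ω = k}).toReal = p k)
    (hNindep : iIndepFun (fun ni : ℕ × ℕ => N ni.1 ni.2) P)
    (hmean : HasSum (fun k : ℕ => (k : ℝ) * p k) μ) (hμ : 1 < μ)
    (hNlogN : Summable (fun k : ℕ => (k : ℝ) * Real.log k * p k))
    (hZ0 : ∀ ω, Z 0 ω = 1)
    (hZrec : ∀ n ω, Z (n + 1) ω = ∑ i ∈ Finset.range (Z n ω), N n i ω)
    (W : Ω → ℝ)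
    (hW : ∀ ω, W ω = Filter.limsup (fun n => (Z n ω : ℝ) / μ ^ n) Filter.atTop)
    (k : ℕ) (V : ℕ → Ω → ℝ)
    (hVmeas : ∀ i, Measurable (V i))
    (hVdist : ∀ i, P.map (V i) = P.map W)
    (hVindep : iIndepFun
      (fun o : Option ℕ =>
        Option.elim o (fun ω => (Z k ω : ℝ)) (fun i ω => V i ω)) P) :
    P.map W = P.map (fun ω => (∑ i ∈ Finset.range (Z k ω), V i ω) / μ ^ k) := by
  classical
  have hμ0 : (0:ℝ) < μ := lt_trans one_pos hμ
  set G : ℕ → MeasurableSpace Ω :=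
    fun n => ⨆ q ∈ {q : ℕ × ℕ | q.1 < n}, MeasurableSpace.comap (N q.1 q.2) inferInstance
    with hGdef
  have hNmeas' : ∀ q : ℕ × ℕ, Measurable ((fun ni : ℕ × ℕ => N ni.1 ni.2) q) :=
    fun q => hNmeas q.1 q.2
  have hGle : ∀ n, G n ≤ (inferInstance : MeasurableSpace Ω) := by
    intro n
    rw [hGdef]
    exact iSup₂_le fun q _ => (hNmeas q.1 q.2).comap_le
  have hGmono : Monotone G := by
    intro n n' hnn'
    rw [hGdef]
    exact biSup_mono fun q hq => lt_of_lt_of_le hq hnn'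
  have hNmeasG : ∀ {n} (j i : ℕ), j < n → Measurable[G n] (N j i) := by
    intro n j i hj
    rw [hGdef]
    exact measurable_iff_comap_le.2 (le_biSup (s := {q : ℕ × ℕ | q.1 < n})
      (f := fun q => MeasurableSpace.comap (N q.1 q.2) inferInstance) (i := (j, i)) hj)
  have hZmeasG : ∀ n, Measurable[G n] (Z n) := by
    intro n
    induction n with
    | zero =>
      have h0 : Z 0 = fun _ => 1 := funext hZ0
      rw [h0]; exact measurable_const
    | succ n ih =>
      have h1 : Z (n + 1) = fun ω => ∑ i ∈ Finset.range (Z n ω), N n i ω := funext (hZrec n)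
      rw [h1]
      exact measurable_cases (ih.mono (hGmono (Nat.le_succ n)) le_rfl)
        (fun l => Finset.measurable_sum _ fun i _ => hNmeasG n i (Nat.lt_succ_self n))
  have hZmeas : ∀ n, Measurable (Z n) := fun n => (hZmeasG n).mono (hGle n) le_rfl
  have hZsetmeas : ∀ n l, MeasurableSet {ω | Z n ω = l} :=
    fun n l => hZmeas n (measurableSet_singleton l)
  -- the generating function
  set fgen : ℝ≥0∞ → ℝ≥0∞ := fun s => ∑' l : ℕ, s ^ l * ENNReal.ofReal (p l) with hfgen
  have hNP : ∀ j i l, P {ω | N j i ω = l} = ENNReal.ofReal (p l) := by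
    intro j i l
    rw [← hNdist j i l, ENNReal.ofReal_toReal (measure_ne_top P _)]
  have hpowN : ∀ (j i : ℕ) (s : ℝ≥0∞), ∫⁻ ω, s ^ N j i ω ∂P = fgen s := by
    intro j i s
    have h1 : ∫⁻ ω, s ^ N j i ω ∂P = ∫⁻ n, s ^ n ∂(P.map (N j i)) :=
      (lintegral_map (measurable_of_countable _) (hNmeas j i)).symm
    rw [h1, lintegral_countable']
    refine tsum_congr fun l => ?_
    rw [Measure.map_apply (hNmeas j i) (measurableSet_singleton l)]
    exact congrArg (s ^ l * ·) (hNP j i l)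
  have hNmean : ∀ j i : ℕ, ∫⁻ ω, (N j i ω : ℝ≥0∞) ∂P = ENNReal.ofReal μ := by
    intro j i
    have h1 : ∫⁻ ω, (N j i ω : ℝ≥0∞) ∂P = ∫⁻ n, (n : ℝ≥0∞) ∂(P.map (N j i)) :=
      (lintegral_map (measurable_of_countable _) (hNmeas j i)).symm
    rw [h1, lintegral_countable', ← hmean.tsum_eq,
      ENNReal.ofReal_tsum_of_nonneg (fun l => mul_nonneg (Nat.cast_nonneg l) (hpnn l))
        hmean.summable]
    refine tsum_congr fun l => ?_
    rw [Measure.map_apply (hNmeas j i) (measurableSet_singleton l)]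
    have : P ((N j i) ⁻¹' {l}) = ENNReal.ofReal (p l) := hNP j i l
    rw [this, ENNReal.ofReal_mul (Nat.cast_nonneg l), ENNReal.ofReal_natCast]
  -- product over one row
  have hprodmeas : ∀ (j l : ℕ) (s : ℝ≥0∞),
      Measurable[⨆ q ∈ {q : ℕ × ℕ | q.1 = j ∧ q.2 < l},
        MeasurableSpace.comap (N q.1 q.2) inferInstance]
        (fun ω => ∏ i ∈ Finset.range l, s ^ N j i ω) := by
    intro j l s
    refine Finset.measurable_prod _ fun i hi => ?_
    have hmem : ((j, i) : ℕ × ℕ) ∈ {q : ℕ × ℕ | q.1 = j ∧ q.2 < l} :=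
      ⟨rfl, Finset.mem_range.1 hi⟩
    exact (measurable_of_countable (fun n : ℕ => s ^ n)).comp
      (measurable_iff_comap_le.2 (le_biSup (f := fun q : ℕ × ℕ => MeasurableSpace.comap (N q.1 q.2) inferInstance) hmem))
  have hprod : ∀ (j l : ℕ) (s : ℝ≥0∞),
      ∫⁻ ω, ∏ i ∈ Finset.range l, s ^ N j i ω ∂P = fgen s ^ l := by
    intro j l s
    induction l with
    | zero => simp
    | succ l ih =>
      have h1 : (fun ω => ∏ i ∈ Finset.range (l + 1), s ^ N j i ω)
          = fun ω => (∏ i ∈ Finset.range l, s ^ N j i ω) * s ^ N j l ω := by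
        funext ω; exact Finset.prod_range_succ _ _
      rw [h1, lintegral_mul_of_indep hNmeas' hNindep {q : ℕ × ℕ | q.1 = j ∧ q.2 < l}
        (hprodmeas j l s) ?_, ih, hpowN j l s, pow_succ]
      have hmem : ((j, l) : ℕ × ℕ) ∈ {q : ℕ × ℕ | q.1 = j ∧ q.2 < l}ᶜ := by
        simp
      exact (measurable_of_countable (fun n : ℕ => s ^ n)).comp
        (measurable_iff_comap_le.2 (le_biSup (f := fun q : ℕ × ℕ => MeasurableSpace.comap (N q.1 q.2) inferInstance) hmem))
  have hGsub : ∀ (j l : ℕ) {C : Set Ω}, MeasurableSet[G j] C →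
      MeasurableSet[⨆ q ∈ {q : ℕ × ℕ | q.1 = j ∧ q.2 < l}ᶜ,
        MeasurableSpace.comap (N q.1 q.2) inferInstance] C := by
    intro j l C hC
    have hsub : {q : ℕ × ℕ | q.1 < j} ⊆ {q : ℕ × ℕ | q.1 = j ∧ q.2 < l}ᶜ := by
      intro q hq
      simp only [Set.mem_compl_iff, Set.mem_setOf_eq, not_and]
      intro h1
      exact absurd (h1 ▸ hq) (lt_irrefl j)
    have := biSup_mono (f := fun q : ℕ × ℕ => MeasurableSpace.comap (N q.1 q.2) inferInstance) hsub
    rw [hGdef] at hC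
    exact this C hC
  have hmaster : ∀ (j l : ℕ) (s : ℝ≥0∞) {C : Set Ω}, MeasurableSet[G j] C →
      ∫⁻ ω in C, ∏ i ∈ Finset.range l, s ^ N j i ω ∂P = fgen s ^ l * P C := by
    intro j l s C hC
    rw [setLIntegral_indep hNmeas' hNindep {q : ℕ × ℕ | q.1 = j ∧ q.2 < l}
      (hprodmeas j l s) (hGsub j l hC), hprod j l s]
  have hmasterN : ∀ (j i : ℕ) {C : Set Ω}, MeasurableSet[G j] C →
      ∫⁻ ω in C, (N j i ω : ℝ≥0∞) ∂P = ENNReal.ofReal μ * P C := by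
    intro j i C hC
    have hg : Measurable[⨆ q ∈ {q : ℕ × ℕ | q.1 = j ∧ q.2 < i + 1},
        MeasurableSpace.comap (N q.1 q.2) inferInstance] (fun ω => (N j i ω : ℝ≥0∞)) := by
      have hmem : ((j, i) : ℕ × ℕ) ∈ {q : ℕ × ℕ | q.1 = j ∧ q.2 < i + 1} :=
        ⟨rfl, Nat.lt_succ_self i⟩
      exact (measurable_of_countable (fun n : ℕ => (n : ℝ≥0∞))).comp
        (measurable_iff_comap_le.2 (le_biSup (f := fun q : ℕ × ℕ => MeasurableSpace.comap (N q.1 q.2) inferInstance) hmem))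
    rw [setLIntegral_indep hNmeas' hNindep _ hg (hGsub j (i + 1) hC), hNmean j i]
  -- splitting a set-integral along the values of Z j
  have hsplit : ∀ (j : ℕ) {B : Set Ω}, MeasurableSet B → ∀ g : Ω → ℝ≥0∞,
      ∫⁻ ω in B, g ω ∂P = ∑' l : ℕ, ∫⁻ ω in ({ω | Z j ω = l} ∩ B), g ω ∂P := by
    intro j B hB g
    rw [lintegral_split (P.restrict B) (hZmeas j) g]
    refine tsum_congr fun l => ?_
    rw [Measure.restrict_restrict (hZsetmeas j l)]
  -- the main identity
  have hmain : ∀ (n k' m : ℕ) (s : ℝ≥0∞),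
      ∫⁻ ω in {ω | Z k' ω = m}, s ^ Z (n + k') ω ∂P
        = fgen^[n] s ^ m * P {ω | Z k' ω = m} := by
    intro n
    induction n with
    | zero =>
      intro k' m s
      rw [zero_add]
      have hc : ∫⁻ ω in {ω | Z k' ω = m}, s ^ Z k' ω ∂P
          = ∫⁻ _ω in {ω | Z k' ω = m}, s ^ m ∂P :=
        setLIntegral_congr_fun (hZsetmeas k' m)
          (fun ω hω => by
            simp only [Set.mem_setOf_eq] at hω; rw [hω])
      rw [hc, setLIntegral_const, Function.iterate_zero_apply]
    | succ n ih =>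
      intro k' m s
      have harr : n + 1 + k' = (n + k') + 1 := by omega
      rw [harr]
      have hBmeasG : MeasurableSet[G (n + k')] {ω | Z k' ω = m} :=
        (hGmono (Nat.le_add_left k' n)) _ (hZmeasG k' (measurableSet_singleton m))
      have hBmeas : MeasurableSet {ω | Z k' ω = m} := hZsetmeas k' m
      rw [hsplit (n + k') hBmeas]
      have hCeq : ∀ l : ℕ,
          ∫⁻ ω in ({ω | Z (n + k') ω = l} ∩ {ω | Z k' ω = m}), s ^ Z (n + k' + 1) ω ∂P
            = fgen s ^ l * P ({ω | Z (n + k') ω = l} ∩ {ω | Z k' ω = m}) := by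
        intro l
        have hCmeasG : MeasurableSet[G (n + k')]
            ({ω | Z (n + k') ω = l} ∩ {ω | Z k' ω = m}) :=
          (hZmeasG (n + k') (measurableSet_singleton l)).inter hBmeasG
        have hCmeas : MeasurableSet ({ω | Z (n + k') ω = l} ∩ {ω | Z k' ω = m}) :=
          (hZsetmeas (n + k') l).inter hBmeas
        have hcong : ∫⁻ ω in ({ω | Z (n + k') ω = l} ∩ {ω | Z k' ω = m}),
            s ^ Z (n + k' + 1) ω ∂P
            = ∫⁻ ω in ({ω | Z (n + k') ω = l} ∩ {ω | Z k' ω = m}),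
              ∏ i ∈ Finset.range l, s ^ N (n + k') i ω ∂P := by
          refine setLIntegral_congr_fun hCmeas (fun ω hω => ?_)
          have h1 : Z (n + k') ω = l := hω.1
          rw [hZrec (n + k') ω, h1, ← Finset.prod_pow_eq_pow_sum]
        rw [hcong, hmaster (n + k') l s hCmeasG]
      rw [tsum_congr hCeq]
      have hback : ∑' l : ℕ, fgen s ^ l * P ({ω | Z (n + k') ω = l} ∩ {ω | Z k' ω = m})
          = ∫⁻ ω in {ω | Z k' ω = m}, fgen s ^ Z (n + k') ω ∂P := by
        rw [hsplit (n + k') hBmeas]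
        refine tsum_congr fun l => ?_
        have hCmeas : MeasurableSet ({ω | Z (n + k') ω = l} ∩ {ω | Z k' ω = m}) :=
          (hZsetmeas (n + k') l).inter hBmeas
        have hc : ∫⁻ ω in ({ω | Z (n + k') ω = l} ∩ {ω | Z k' ω = m}),
            fgen s ^ Z (n + k') ω ∂P
            = ∫⁻ _ω in ({ω | Z (n + k') ω = l} ∩ {ω | Z k' ω = m}), fgen s ^ l ∂P :=
          setLIntegral_congr_fun hCmeas (fun ω hω => by
            rw [hω.1])
        rw [hc, setLIntegral_const]
      rw [hback, ih k' m (fgen s), Function.iterate_succ_apply]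
  -- mean recursion
  have hmeanstep : ∀ (n : ℕ) {B : Set Ω}, MeasurableSet[G n] B →
      ∫⁻ ω in B, (Z (n + 1) ω : ℝ≥0∞) ∂P
        = ENNReal.ofReal μ * ∫⁻ ω in B, (Z n ω : ℝ≥0∞) ∂P := by
    intro n B hBG
    have hBmeas : MeasurableSet B := hGle n B hBG
    have hLl : ∀ l : ℕ, ∫⁻ ω in ({ω | Z n ω = l} ∩ B), (Z (n + 1) ω : ℝ≥0∞) ∂P
        = ENNReal.ofReal μ * ((l : ℝ≥0∞) * P ({ω | Z n ω = l} ∩ B)) := by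
      intro l
      have hCmeasG : MeasurableSet[G n] ({ω | Z n ω = l} ∩ B) :=
        (hZmeasG n (measurableSet_singleton l)).inter hBG
      have hCmeas : MeasurableSet ({ω | Z n ω = l} ∩ B) := (hZsetmeas n l).inter hBmeas
      have hcong : ∫⁻ ω in ({ω | Z n ω = l} ∩ B), (Z (n + 1) ω : ℝ≥0∞) ∂P
          = ∫⁻ ω in ({ω | Z n ω = l} ∩ B),
            ∑ i ∈ Finset.range l, (N n i ω : ℝ≥0∞) ∂P := by
        refine setLIntegral_congr_fun hCmeas (fun ω hω => ?_)
        rw [hZrec n ω, hω.1, Nat.cast_sum]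
      rw [hcong, lintegral_finset_sum (f := fun i ω => (N n i ω : ℝ≥0∞)) _ fun i _ =>
        ((measurable_of_countable (fun x : ℕ => (x : ℝ≥0∞))).comp (hNmeas n i))]
      have hsum : ∀ i ∈ Finset.range l,
          ∫⁻ ω in ({ω | Z n ω = l} ∩ B), (N n i ω : ℝ≥0∞) ∂P
            = ENNReal.ofReal μ * P ({ω | Z n ω = l} ∩ B) :=
        fun i _ => hmasterN n i hCmeasG
      rw [Finset.sum_congr rfl hsum, Finset.sum_const, Finset.card_range, nsmul_eq_mul]
      ring
    have hRl : ∀ l : ℕ, ∫⁻ ω in ({ω | Z n ω = l} ∩ B), (Z n ω : ℝ≥0∞) ∂P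
        = (l : ℝ≥0∞) * P ({ω | Z n ω = l} ∩ B) := by
      intro l
      have hCmeas : MeasurableSet ({ω | Z n ω = l} ∩ B) := (hZsetmeas n l).inter hBmeas
      have hc : ∫⁻ ω in ({ω | Z n ω = l} ∩ B), (Z n ω : ℝ≥0∞) ∂P
          = ∫⁻ _ω in ({ω | Z n ω = l} ∩ B), (l : ℝ≥0∞) ∂P :=
        setLIntegral_congr_fun hCmeas (fun ω hω => by rw [hω.1])
      rw [hc, setLIntegral_const]
    rw [hsplit n hBmeas, tsum_congr hLl, ENNReal.tsum_mul_left,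
      hsplit n hBmeas (fun ω => (Z n ω : ℝ≥0∞)), tsum_congr hRl]
  have hZmean : ∀ n : ℕ, ∫⁻ ω, (Z n ω : ℝ≥0∞) ∂P = ENNReal.ofReal μ ^ n := by
    intro n
    induction n with
    | zero => simp [hZ0]
    | succ n ih =>
      have h := hmeanstep n (MeasurableSet.univ : MeasurableSet[G n] Set.univ)
      rw [Measure.restrict_univ] at h
      rw [h, ih, pow_succ]
      ring
  -- the martingale Z n / μ^n
  set M : ℕ → Ω → ℝ := fun n ω => (Z n ω : ℝ) / μ ^ n with hMdef
  have hZrmeas : ∀ n, Measurable fun ω => (Z n ω : ℝ) :=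
    fun n => (measurable_of_countable (fun x : ℕ => (x : ℝ))).comp (hZmeas n)
  have hZrint : ∀ n, Integrable (fun ω => (Z n ω : ℝ)) P := by
    intro n
    refine ⟨(hZrmeas n).aestronglyMeasurable, ?_⟩
    have hnn : ∫⁻ ω, (‖(Z n ω : ℝ)‖₊ : ℝ≥0∞) ∂P = ENNReal.ofReal μ ^ n := by
      rw [← hZmean n]
      refine lintegral_congr fun ω => ?_
      rw [← enorm_eq_nnnorm, Real.enorm_eq_ofReal (Nat.cast_nonneg _), ENNReal.ofReal_natCast]
    exact lt_of_le_of_lt (le_of_eq hnn) (ENNReal.pow_lt_top ENNReal.ofReal_lt_top)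
  have hMint : ∀ n, Integrable (M n) P := fun n => (hZrint n).div_const _
  set 𝒢 : Filtration ℕ (inferInstance : MeasurableSpace Ω) := ⟨G, hGmono, hGle⟩ with h𝒢
  have hadp : StronglyAdapted 𝒢 M := by
    intro n
    exact (((measurable_of_countable (fun x : ℕ => (x : ℝ))).comp
      (hZmeasG n)).div_const _).stronglyMeasurable
  have hrs : ∀ (j : ℕ) (s : Set Ω), MeasurableSet s →
      ∫ ω in s, (Z j ω : ℝ) ∂P = (∫⁻ ω in s, (Z j ω : ℝ≥0∞) ∂P).toReal := by
    intro j s _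
    rw [integral_eq_lintegral_of_nonneg_ae
      (Filter.Eventually.of_forall fun ω => Nat.cast_nonneg _)
      ((hZrmeas j).aestronglyMeasurable)]
    congr 1
    exact lintegral_congr fun ω => ENNReal.ofReal_natCast _
  have hsetint : ∀ (n : ℕ) (s : Set Ω), MeasurableSet[G n] s →
      ∫ ω in s, M (n + 1) ω ∂P = ∫ ω in s, M n ω ∂P := by
    intro n s hs
    have hsm : MeasurableSet s := hGle n s hs
    have h1 : ∫ ω in s, M (n + 1) ω ∂P = (∫ ω in s, (Z (n + 1) ω : ℝ) ∂P) / μ ^ (n + 1) :=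
      integral_div _ _
    have h2 : ∫ ω in s, M n ω ∂P = (∫ ω in s, (Z n ω : ℝ) ∂P) / μ ^ n := integral_div _ _
    rw [h1, h2, hrs (n + 1) s hsm, hrs n s hsm, hmeanstep n hs, ENNReal.toReal_mul,
      ENNReal.toReal_ofReal hμ0.le]
    rw [pow_succ]
    have hμn : (μ : ℝ) ^ n ≠ 0 := by positivity
    field_simp
  have hmart : Martingale M 𝒢 P := by
    refine martingale_nat hadp hMint fun n => ?_
    show M n =ᵐ[P] P[M (n + 1)|G n]
    exact (ae_eq_condExp_of_forall_setIntegral_eq (hGle n) (hMint (n + 1))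
      (fun s _ _ => (hMint n).integrableOn) (fun s hs _ => (hsetint n s hs).symm)
      (StronglyMeasurable.aestronglyMeasurable (hadp n)))
  have hbdd : ∀ n, eLpNorm (M n) 1 P ≤ ((1 : ℝ≥0) : ℝ≥0∞) := by
    intro n
    rw [eLpNorm_one_eq_lintegral_enorm]
    have hpt : ∀ ω, (‖M n ω‖₊ : ℝ≥0∞)
        = (Z n ω : ℝ≥0∞) * (ENNReal.ofReal (μ ^ n))⁻¹ := by
      intro ω
      rw [← enorm_eq_nnnorm, Real.enorm_eq_ofReal (by positivity), ENNReal.ofReal_div_of_pos (by positivity),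
        div_eq_mul_inv, ENNReal.ofReal_natCast]
    calc ∫⁻ ω, (‖M n ω‖₊ : ℝ≥0∞) ∂P
        = ∫⁻ ω, (Z n ω : ℝ≥0∞) * (ENNReal.ofReal (μ ^ n))⁻¹ ∂P := lintegral_congr hpt
      _ = ENNReal.ofReal μ ^ n * (ENNReal.ofReal (μ ^ n))⁻¹ := by
          rw [lintegral_mul_const (f := fun ω => (Z n ω : ℝ≥0∞)) _
            ((measurable_of_countable (fun x : ℕ => (x : ℝ≥0∞))).comp (hZmeas n)), hZmean n]
      _ ≤ ((1 : ℝ≥0) : ℝ≥0∞) := by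
          rw [← ENNReal.ofReal_pow hμ0.le, ENNReal.coe_one]
          exact le_of_eq (ENNReal.mul_inv_cancel
            (by simp only [ne_eq, ENNReal.ofReal_eq_zero, not_le]; positivity)
            ENNReal.ofReal_ne_top)
  -- almost sure convergence
  have hconv := hmart.submartingale.ae_tendsto_limitProcess hbdd
  set L : Ω → ℝ := 𝒢.limitProcess M P with hLdef
  have hLmeas : Measurable L := Filtration.stronglyMeasurable_limit_process'.measurable
  have hWL : W =ᵐ[P] L := by
    filter_upwards [hconv] with ω hω
    exact (hW ω).trans hω.limsup_eq
  have hWtend : ∀ᵐ ω ∂P, Tendsto (fun n => M n ω) atTop (𝓝 (W ω)) := by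
    filter_upwards [hconv, hWL] with ω hω heq
    rw [heq]
    exact hω
  have hWnonneg : ∀ ω, 0 ≤ W ω := by
    intro ω
    rw [hW ω, Filter.limsup_eq]
    refine Real.sInf_nonneg fun x hx => ?_
    obtain ⟨n, hn⟩ := hx.exists
    refine le_trans ?_ hn
    positivity
  have hWaemeas : AEMeasurable W P := hLmeas.aemeasurable.congr hWL.symm
  have hMmeas : ∀ n, Measurable (M n) := fun n => (hZrmeas n).div_const _
  have hMnonneg : ∀ n ω, 0 ≤ M n ω := by
    intro n ω
    rw [hMdef]
    positivity
  -- the Laplace transform of W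
  set φ : ℝ → ℝ≥0∞ := fun c => ∫⁻ ω, ENNReal.ofReal (Real.exp (-(c * W ω))) ∂P with hφdef
  have hiter : ∀ (n : ℕ) (s : ℝ≥0∞), ∫⁻ ω, s ^ Z n ω ∂P = fgen^[n] s := by
    intro n s
    have h := hmain n 0 1 s
    have huniv : {ω | Z 0 ω = 1} = Set.univ := by ext ω; simp [hZ0 ω]
    rw [huniv, Measure.restrict_univ] at h
    simpa using h
  have hpt : ∀ (j : ℕ) (c : ℝ) (ω : Ω),
      ENNReal.ofReal (Real.exp (-(c / μ ^ j))) ^ Z j ω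
        = ENNReal.ofReal (Real.exp (-(c * M j ω))) := by
    intro j c ω
    rw [← ENNReal.ofReal_pow (Real.exp_nonneg _), ← Real.exp_nat_mul]
    congr 2
    rw [hMdef]
    field_simp
  have hexpmeas : ∀ (c : ℝ) {g : Ω → ℝ},  Measurable g →
      Measurable fun ω => ENNReal.ofReal (Real.exp (-(c * g ω))) := by
    intro c g hg
    exact ENNReal.measurable_ofReal.comp
      (Real.continuous_exp.measurable.comp ((hg.const_mul c).neg))
  have hexple : ∀ (c : ℝ) (x : ℝ), 0 ≤ c → 0 ≤ x →
      ENNReal.ofReal (Real.exp (-(c * x))) ≤ 1 := by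
    intro c x hc hx
    rw [ENNReal.ofReal_le_one]
    rw [Real.exp_le_one_iff]
    simp only [neg_nonpos]
    positivity
  have htendφ : ∀ c : ℝ, 0 ≤ c →
      Tendsto (fun n => fgen^[n] (ENNReal.ofReal (Real.exp (-(c / μ ^ n)))))
        atTop (𝓝 (φ c)) := by
    intro c hc
    have heq : (fun n => fgen^[n] (ENNReal.ofReal (Real.exp (-(c / μ ^ n)))))
        = fun n => ∫⁻ ω, ENNReal.ofReal (Real.exp (-(c * M n ω))) ∂P := by
      funext n
      rw [← hiter n _]
      exact lintegral_congr fun ω => hpt n c ω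
    rw [heq, hφdef]
    refine tendsto_lintegral_of_dominated_convergence (fun _ => (1 : ℝ≥0∞))
      (fun n => hexpmeas c (hMmeas n)) (fun n => Filter.Eventually.of_forall fun ω =>
        hexple c _ hc (hMnonneg n ω)) (by rw [lintegral_one]; exact measure_ne_top _ _) ?_
    filter_upwards [hWtend] with ω hω
    exact (ENNReal.continuous_ofReal.tendsto _).comp
      ((Real.continuous_exp.tendsto _).comp ((hω.const_mul c).neg))
  have hφm : ∀ (c : ℝ), 0 ≤ c → ∀ m : ℕ,
      ∫⁻ ω in {ω | Z k ω = m}, ENNReal.ofReal (Real.exp (-(c * W ω))) ∂P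
        = φ (c / μ ^ k) ^ m * P {ω | Z k ω = m} := by
    intro c hc m
    have hBmeas : MeasurableSet {ω | Z k ω = m} := hZsetmeas k m
    have hseq : ∀ n : ℕ, ∫⁻ ω in {ω | Z k ω = m},
        ENNReal.ofReal (Real.exp (-(c * M (n + k) ω))) ∂P
        = fgen^[n] (ENNReal.ofReal (Real.exp (-(c / μ ^ k / μ ^ n)))) ^ m
          * P {ω | Z k ω = m} := by
      intro n
      have harg : c / μ ^ k / μ ^ n = c / μ ^ (n + k) := by
        rw [pow_add]
        rw [div_div, mul_comm]
      have h1 : ∫⁻ ω in {ω | Z k ω = m},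
          ENNReal.ofReal (Real.exp (-(c * M (n + k) ω))) ∂P
          = ∫⁻ ω in {ω | Z k ω = m},
            ENNReal.ofReal (Real.exp (-(c / μ ^ (n + k)))) ^ Z (n + k) ω ∂P :=
        setLIntegral_congr_fun hBmeas
          (fun ω _ => (hpt (n + k) c ω).symm)
      rw [h1, hmain n k m _, harg]
    have hDCT2 : Tendsto (fun n => ∫⁻ ω in {ω | Z k ω = m},
        ENNReal.ofReal (Real.exp (-(c * M (n + k) ω))) ∂P) atTop
        (𝓝 (∫⁻ ω in {ω | Z k ω = m}, ENNReal.ofReal (Real.exp (-(c * W ω))) ∂P)) := by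
      refine tendsto_lintegral_of_dominated_convergence (fun _ => (1 : ℝ≥0∞))
        (fun n => hexpmeas c (hMmeas (n + k))) (fun n => Filter.Eventually.of_forall fun ω =>
          hexple c _ hc (hMnonneg (n + k) ω))
        (by rw [lintegral_one]; exact measure_ne_top _ _) ?_
      · refine ae_restrict_of_ae ?_
        filter_upwards [hWtend] with ω hω
        exact (ENNReal.continuous_ofReal.tendsto _).comp
          ((Real.continuous_exp.tendsto _).comp
            (((hω.comp (tendsto_add_atTop_nat k)).const_mul c).neg))
    have hlim2 : Tendsto (fun n =>
        fgen^[n] (ENNReal.ofReal (Real.exp (-(c / μ ^ k / μ ^ n)))) ^ m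
          * P {ω | Z k ω = m}) atTop
        (𝓝 (φ (c / μ ^ k) ^ m * P {ω | Z k ω = m})) :=
      ENNReal.Tendsto.mul_const (ENNReal.Tendsto.pow (htendφ (c / μ ^ k)
        (div_nonneg hc (by positivity)))) (Or.inr (measure_ne_top P _))
    rw [show (fun n => ∫⁻ ω in {ω | Z k ω = m},
        ENNReal.ofReal (Real.exp (-(c * M (n + k) ω))) ∂P)
      = fun n => fgen^[n] (ENNReal.ofReal (Real.exp (-(c / μ ^ k / μ ^ n)))) ^ m
          * P {ω | Z k ω = m} from funext hseq] at hDCT2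
    exact tendsto_nhds_unique hDCT2 hlim2
  have hφdecomp : ∀ c : ℝ, 0 ≤ c →
      φ c = ∑' m : ℕ, φ (c / μ ^ k) ^ m * P {ω | Z k ω = m} := by
    intro c hc
    have h0 : φ c = ∑' m : ℕ, ∫⁻ ω in {ω | Z k ω = m},
        ENNReal.ofReal (Real.exp (-(c * W ω))) ∂P := by
      rw [hφdef]
      exact lintegral_split P (hZmeas k) _
    rw [h0]
    exact tsum_congr fun m => hφm c hc m
  -- the V side
  set Y : Option ℕ → Ω → ℝ :=
    fun o => Option.elim o (fun ω => (Z k ω : ℝ)) (fun i ω => V i ω) with hYdef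
  have hYmeas : ∀ o : Option ℕ, Measurable (Y o) := by
    intro o
    cases o with
    | none => exact (measurable_of_countable (fun x : ℕ => (x : ℝ))).comp (hZmeas k)
    | some i => exact hVmeas i
  have hBY : ∀ m : ℕ, MeasurableSet[MeasurableSpace.comap (Y none) inferInstance]
      {ω | Z k ω = m} := by
    intro m
    refine ⟨{(m : ℝ)}, measurableSet_singleton _, ?_⟩
    ext ω
    simp [hYdef, Nat.cast_inj]
  have hgV : ∀ (c : ℝ) (i : ℕ), ∫⁻ ω, ENNReal.ofReal (Real.exp (-(c * V i ω))) ∂P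
      = ∫⁻ ω, ENNReal.ofReal (Real.exp (-(c * W ω))) ∂P := by
    intro c i
    have hfm : Measurable fun x : ℝ => ENNReal.ofReal (Real.exp (-(c * x))) :=
      ENNReal.measurable_ofReal.comp (Real.continuous_exp.measurable.comp
        ((measurable_id.const_mul c).neg))
    rw [← lintegral_map hfm (hVmeas i), hVdist i, lintegral_map' hfm.aemeasurable hWaemeas]
  have hVg_meas : ∀ (c : ℝ) (l : ℕ),
      Measurable[⨆ o ∈ {o : Option ℕ | ∃ i', i' < l ∧ o = some i'},
        MeasurableSpace.comap (Y o) inferInstance]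
        (fun ω => ∏ i ∈ Finset.range l, ENNReal.ofReal (Real.exp (-(c * V i ω)))) := by
    intro c l
    refine Finset.measurable_prod _ fun i hi => ?_
    have hmem : (some i : Option ℕ) ∈ {o : Option ℕ | ∃ i', i' < l ∧ o = some i'} :=
      ⟨i, Finset.mem_range.1 hi, rfl⟩
    exact (ENNReal.measurable_ofReal.comp (Real.continuous_exp.measurable.comp
      ((measurable_id.const_mul c).neg))).comp
      (measurable_iff_comap_le.2 (le_biSup (f := fun o : Option ℕ =>
        MeasurableSpace.comap (Y o) inferInstance) hmem))
  have hVprodint : ∀ (c : ℝ) (l : ℕ),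
      ∫⁻ ω, ∏ i ∈ Finset.range l, ENNReal.ofReal (Real.exp (-(c * V i ω))) ∂P
        = (∫⁻ ω, ENNReal.ofReal (Real.exp (-(c * W ω))) ∂P) ^ l := by
    intro c l
    induction l with
    | zero => simp
    | succ l ih =>
      have h1 : (fun ω => ∏ i ∈ Finset.range (l + 1), ENNReal.ofReal (Real.exp (-(c * V i ω))))
          = fun ω => (∏ i ∈ Finset.range l, ENNReal.ofReal (Real.exp (-(c * V i ω))))
            * ENNReal.ofReal (Real.exp (-(c * V l ω))) := by
        funext ω; exact Finset.prod_range_succ _ _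
      have hmem : (some l : Option ℕ) ∈ {o : Option ℕ | ∃ i', i' < l ∧ o = some i'}ᶜ := by
        simp only [Set.mem_compl_iff, Set.mem_setOf_eq, not_exists]
        intro i' hi'
        rcases hi' with ⟨h1', h2'⟩
        exact absurd (Option.some_inj.1 h2') (by omega)
      have hfl : Measurable[⨆ o ∈ {o : Option ℕ | ∃ i', i' < l ∧ o = some i'}ᶜ,
          MeasurableSpace.comap (Y o) inferInstance]
          (fun ω => ENNReal.ofReal (Real.exp (-(c * V l ω)))) :=
        (ENNReal.measurable_ofReal.comp (Real.continuous_exp.measurable.comp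
          ((measurable_id.const_mul c).neg))).comp
          (measurable_iff_comap_le.2 (le_biSup (f := fun o : Option ℕ =>
            MeasurableSpace.comap (Y o) inferInstance) hmem))
      rw [h1, lintegral_mul_of_indep hYmeas hVindep _ (hVg_meas c l) hfl, ih, hgV c l,
        pow_succ]
  set F : Ω → ℝ := fun ω => (∑ i ∈ Finset.range (Z k ω), V i ω) / μ ^ k with hFdef
  have hFmeas : Measurable F := by
    rw [hFdef]
    exact (measurable_cases (g := fun l ω => (∑ i ∈ Finset.range l, V i ω) / μ ^ k)
      (hZmeas k) (fun l => (Finset.measurable_sum _ fun i _ => hVmeas i).div_const _))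
  have hofReal_prod : ∀ (s : Finset ℕ) (f : ℕ → ℝ), (∀ i, 0 ≤ f i) →
      ENNReal.ofReal (∏ i ∈ s, f i) = ∏ i ∈ s, ENNReal.ofReal (f i) := by
    intro s f hf
    induction s using Finset.induction_on with
    | empty => simp
    | insert a s ha ih =>
      rw [Finset.prod_insert ha, Finset.prod_insert ha, ENNReal.ofReal_mul (hf _), ih]
  have hVm : ∀ (c : ℝ) (m : ℕ),
      ∫⁻ ω in {ω | Z k ω = m}, ENNReal.ofReal (Real.exp (-(c * F ω))) ∂P
        = φ (c / μ ^ k) ^ m * P {ω | Z k ω = m} := by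
    intro c m
    have hBmeas : MeasurableSet {ω | Z k ω = m} := hZsetmeas k m
    have hcong : ∫⁻ ω in {ω | Z k ω = m}, ENNReal.ofReal (Real.exp (-(c * F ω))) ∂P
        = ∫⁻ ω in {ω | Z k ω = m},
          ∏ i ∈ Finset.range m, ENNReal.ofReal (Real.exp (-(c / μ ^ k * V i ω))) ∂P := by
      refine setLIntegral_congr_fun hBmeas (fun ω hω => ?_)
      have hZω : Z k ω = m := hω
      have h2 : -(c * F ω) = ∑ i ∈ Finset.range m, -(c / μ ^ k * V i ω) := by
        rw [hFdef]
        simp only [hZω]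
        have h3 : ∀ i, -(c / μ ^ k * V i ω) = -(c / μ ^ k) * V i ω := fun i => by ring
        simp_rw [h3]
        rw [← Finset.mul_sum]
        ring
      rw [h2, Real.exp_sum, hofReal_prod _ _ fun i => Real.exp_nonneg _]
    rw [hcong]
    have hCside : MeasurableSet[⨆ o ∈ {o : Option ℕ | ∃ i', i' < m ∧ o = some i'}ᶜ,
        MeasurableSpace.comap (Y o) inferInstance] {ω | Z k ω = m} := by
      have hmemn : (none : Option ℕ) ∈ {o : Option ℕ | ∃ i', i' < m ∧ o = some i'}ᶜ := by
        simp
      exact (le_biSup (f := fun o : Option ℕ =>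
        MeasurableSpace.comap (Y o) inferInstance) hmemn) _ (hBY m)
    rw [setLIntegral_indep hYmeas hVindep _ (hVg_meas (c / μ ^ k) m) hCside,
      hVprodint (c / μ ^ k) m]
  have hψdecomp : ∀ c : ℝ, ∫⁻ ω, ENNReal.ofReal (Real.exp (-(c * F ω))) ∂P
      = ∑' m : ℕ, φ (c / μ ^ k) ^ m * P {ω | Z k ω = m} :=
    fun c => (lintegral_split P (hZmeas k) _).trans (tsum_congr fun m => hVm c m)
  have hlap : ∀ c : ℝ, 0 ≤ c →
      φ c = ∫⁻ ω, ENNReal.ofReal (Real.exp (-(c * F ω))) ∂P :=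
    fun c hc => (hφdecomp c hc).trans (hψdecomp c).symm
  -- nonnegativity of F a.e.
  have hVnonneg : ∀ᵐ ω ∂P, ∀ i, 0 ≤ V i ω := by
    rw [ae_all_iff]
    intro i
    have h1 : P {ω | V i ω < 0} = 0 := by
      have h2 : P {ω | V i ω < 0} = (P.map (V i)) (Set.Iio 0) := by
        rw [Measure.map_apply (hVmeas i) measurableSet_Iio]
        rfl
      rw [h2, hVdist i, Measure.map_apply_of_aemeasurable hWaemeas measurableSet_Iio]
      have h3 : W ⁻¹' (Set.Iio 0) = ∅ := by
        ext ω
        simp only [Set.mem_preimage, Set.mem_Iio, Set.mem_empty_iff_false, iff_false, not_lt]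
        exact hWnonneg ω
      rw [h3, measure_empty]
    rw [ae_iff]
    simpa [not_le] using h1
  have hFnonneg : ∀ᵐ ω ∂P, 0 ≤ F ω := by
    filter_upwards [hVnonneg] with ω hω
    rw [hFdef]
    exact div_nonneg (Finset.sum_nonneg fun i _ => hω i) (by positivity)
  -- truncations
  set W1 : Ω → ℝ := fun ω => max (L ω) 0 with hW1
  set F1 : Ω → ℝ := fun ω => max (F ω) 0 with hF1
  have hW1meas : Measurable W1 := hLmeas.max measurable_const
  have hF1meas : Measurable F1 := hFmeas.max measurable_const
  have hW1nonneg : ∀ ω, 0 ≤ W1 ω := fun ω => le_max_right _ _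
  have hF1nonneg : ∀ ω, 0 ≤ F1 ω := fun ω => le_max_right _ _
  have hWW1 : W =ᵐ[P] W1 := by
    filter_upwards [hWL] with ω hω
    rw [hW1]
    simp only [← hω]
    exact (max_eq_left (hWnonneg ω)).symm
  have hFF1 : F =ᵐ[P] F1 := by
    filter_upwards [hFnonneg] with ω hω
    rw [hF1]
    exact (max_eq_left hω).symm
  -- moment equality for exp(-W1), exp(-F1)
  have hexpmeasW1 : Measurable fun ω => Real.exp (-W1 ω) :=
    Real.continuous_exp.measurable.comp hW1meas.neg
  have hexpmeasF1 : Measurable fun ω => Real.exp (-F1 ω) :=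
    Real.continuous_exp.measurable.comp hF1meas.neg
  have hBoch : ∀ (g : Ω → ℝ), Measurable g → (∀ ω, 0 ≤ g ω) → ∀ n : ℕ,
      ∫ ω, Real.exp (-g ω) ^ n ∂P
        = (∫⁻ ω, ENNReal.ofReal (Real.exp (-((n : ℝ) * g ω))) ∂P).toReal := by
    intro g hg hgnn n
    have hsm : AEStronglyMeasurable (fun ω => Real.exp (-g ω) ^ n) P :=
      ((Real.continuous_exp.measurable.comp hg.neg).pow_const n).aestronglyMeasurable
    have hnn : 0 ≤ᵐ[P] fun ω => Real.exp (-g ω) ^ n :=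
      Filter.Eventually.of_forall fun ω => pow_nonneg (Real.exp_nonneg _) n
    rw [integral_eq_lintegral_of_nonneg_ae hnn hsm]
    congr 1
    refine lintegral_congr fun ω => ?_
    rw [← Real.exp_nat_mul]
    congr 2
    ring
  have hmom : ∀ n : ℕ, ∫ ω, Real.exp (-W1 ω) ^ n ∂P = ∫ ω, Real.exp (-F1 ω) ^ n ∂P := by
    intro n
    have hlapn := hlap (n : ℝ) (Nat.cast_nonneg n)
    have hlW : ∫⁻ ω, ENNReal.ofReal (Real.exp (-((n : ℝ) * W ω))) ∂P
        = ∫⁻ ω, ENNReal.ofReal (Real.exp (-((n : ℝ) * W1 ω))) ∂P :=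
      lintegral_congr_ae (by filter_upwards [hWW1] with ω h using by rw [h])
    have hlF : ∫⁻ ω, ENNReal.ofReal (Real.exp (-((n : ℝ) * F ω))) ∂P
        = ∫⁻ ω, ENNReal.ofReal (Real.exp (-((n : ℝ) * F1 ω))) ∂P :=
      lintegral_congr_ae (by filter_upwards [hFF1] with ω h using by rw [h])
    rw [hBoch W1 hW1meas hW1nonneg n, hBoch F1 hF1meas hF1nonneg n, ← hlW, ← hlF]
    have hφn : φ (n : ℝ) = ∫⁻ ω, ENNReal.ofReal (Real.exp (-((n : ℝ) * W ω))) ∂P := by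
      simp only [hφdef]
    rw [← hφn, hlapn]
  have hexpW101 : ∀ ω, Real.exp (-W1 ω) ∈ Set.Icc (0 : ℝ) 1 := fun ω =>
    ⟨(Real.exp_pos _).le, Real.exp_le_one_iff.2 (neg_nonpos.2 (hW1nonneg ω))⟩
  have hexpF101 : ∀ ω, Real.exp (-F1 ω) ∈ Set.Icc (0 : ℝ) 1 := fun ω =>
    ⟨(Real.exp_pos _).le, Real.exp_le_one_iff.2 (neg_nonpos.2 (hF1nonneg ω))⟩
  have hmapexp : P.map (fun ω => Real.exp (-W1 ω)) = P.map (fun ω => Real.exp (-F1 ω)) :=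
    map_eq_of_moments hexpmeasW1 hexpmeasF1 hexpW101 hexpF101 hmom
  -- conclude via CDFs
  have hcdf : ∀ (g : Ω → ℝ), Measurable g → (t : ℝ) →
      P.map g (Set.Iic t) = P.map (fun ω => Real.exp (-g ω)) (Set.Ici (Real.exp (-t))) := by
    intro g hg t
    have hm : Measurable fun ω => Real.exp (-g ω) :=
      Real.continuous_exp.measurable.comp hg.neg
    rw [Measure.map_apply hg measurableSet_Iic, Measure.map_apply hm measurableSet_Ici]
    congr 1
    ext ω
    simp only [Set.mem_preimage, Set.mem_Iic, Set.mem_Ici]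
    constructor
    · intro h
      exact Real.exp_le_exp.2 (neg_le_neg h)
    · intro h
      exact le_of_neg_le_neg (Real.exp_le_exp.1 h)
  have hfinal : P.map W1 = P.map F1 := by
    haveI : IsProbabilityMeasure (P.map W1) := Measure.isProbabilityMeasure_map hW1meas.aemeasurable
    refine Measure.ext_of_Iic (P.map W1) (P.map F1) fun t => ?_
    rw [hcdf W1 hW1meas t, hcdf F1 hF1meas t, hmapexp]
  calc P.map W = P.map W1 := Measure.map_congr hWW1
    _ = P.map F1 := hfinal
    _ = P.map F := (Measure.map_congr hFF1).symm
end

section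
/- In the Böttcher case (p_1 = 0), with ν := min{i ≥ 0 : p_i ≠ 0} ≥ 2 and β := log ν / log μ, there exists ε_0 > 0 such that for all 0 < ε < ε_0, −log P{W < ε} ≤ ((−log p_ν) · ν²/(ν − 1)) · ε^{−β/(1−β)}. -/
open MeasureTheory ProbabilityTheory Filter
open scoped ENNReal NNReal

lemma gw_lintegral_nat {Ω : Type*} [MeasurableSpace Ω] (Q : Measure Ω) (f : Ω → ℕ)
    (hf : Measurable f) :
    ∫⁻ ω, (f ω : ℝ≥0∞) ∂Q = ∑' m : ℕ, (m : ℝ≥0∞) * Q {ω | f ω = m} := by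
  have hpt : ∀ ω, (f ω : ℝ≥0∞)
      = ∑' m : ℕ, Set.indicator {ω | f ω = m} (fun _ => (m : ℝ≥0∞)) ω := by
    intro ω
    rw [tsum_eq_single (f ω)]
    · simp [Set.indicator_of_mem, Set.mem_setOf_eq]
    · intro m hm
      exact Set.indicator_of_notMem (by simp [Set.mem_setOf_eq]; exact fun h => hm h.symm) _
  calc ∫⁻ ω, (f ω : ℝ≥0∞) ∂Q
      = ∫⁻ ω, ∑' m : ℕ, Set.indicator {ω | f ω = m} (fun _ => (m : ℝ≥0∞)) ω ∂Q := by
        exact lintegral_congr hpt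
    _ = ∑' m : ℕ, ∫⁻ ω, Set.indicator {ω | f ω = m} (fun _ => (m : ℝ≥0∞)) ω ∂Q := by
        refine lintegral_tsum fun m => ?_
        exact (measurable_const.indicator (hf (measurableSet_singleton m))).aemeasurable
    _ = ∑' m : ℕ, (m : ℝ≥0∞) * Q {ω | f ω = m} := by
        congr 1; funext m
        have hms : MeasurableSet {ω | f ω = m} := hf (measurableSet_singleton m)
        rw [lintegral_indicator hms, setLIntegral_const]

lemma gw_indep_setLintegral {Ω : Type*} [mΩ : MeasurableSpace Ω] (P : Measure Ω)
    [IsProbabilityMeasure P] {m₁ m₂ : MeasurableSpace Ω} (h : Indep m₁ m₂ P)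
    (h1 : m₁ ≤ mΩ) (h2 : m₂ ≤ mΩ)
    {B : Set Ω} (hB : MeasurableSet[m₁] B) {f : Ω → ℕ} (hf : Measurable[m₂] f) :
    ∫⁻ ω in B, (f ω : ℝ≥0∞) ∂P = P B * ∫⁻ ω, (f ω : ℝ≥0∞) ∂P := by
  have hfm : Measurable[mΩ] f := hf.mono h2 le_rfl
  have hBm : MeasurableSet[mΩ] B := h1 _ hB
  rw [@gw_lintegral_nat Ω mΩ (P.restrict B) f hfm, @gw_lintegral_nat Ω mΩ P f hfm]
  have hres : ∀ m : ℕ, (P.restrict B) {ω | f ω = m} = P (B ∩ {ω | f ω = m}) := by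
    intro m
    have hid : {ω | f ω = m} = f ⁻¹' {m} := rfl
    rw [hid, @Measure.restrict_apply Ω mΩ P _ _ (hfm (measurableSet_singleton m)), Set.inter_comm]
  have hmul : ∀ m : ℕ, P (B ∩ {ω | f ω = m}) = P B * P {ω | f ω = m} := by
    intro m
    exact (Indep_iff _ _ _).mp h B {ω | f ω = m} hB (hf (measurableSet_singleton m))
  calc ∑' m : ℕ, (m : ℝ≥0∞) * (P.restrict B) {ω | f ω = m}
      = ∑' m : ℕ, P B * ((m : ℝ≥0∞) * P {ω | f ω = m}) := by
        congr 1; funext m; rw [hres, hmul]; ring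
    _ = P B * ∑' m : ℕ, (m : ℝ≥0∞) * P {ω | f ω = m} := by rw [ENNReal.tsum_mul_left]

lemma gw_branch_step {Ω : Type*} [mΩ : MeasurableSpace Ω] (P : Measure Ω)
    [IsProbabilityMeasure P] {mL mR : MeasurableSpace Ω} (hL : mL ≤ mΩ) (hR : mR ≤ mΩ)
    (hind : Indep mL mR P) (f : ℕ → Ω → ℕ) (hfmR : ∀ i, Measurable[mR] (f i))
    (c : ℝ≥0∞) (hEf : ∀ i, ∫⁻ ω, (f i ω : ℝ≥0∞) ∂P = c)
    {g : Ω → ℕ} (hg : Measurable[mL] g) {B : Set Ω} (hB : MeasurableSet[mL] B) :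
    ∫⁻ ω in B, ((∑ i ∈ Finset.range (g ω), f i ω : ℕ) : ℝ≥0∞) ∂P
      = c * ∫⁻ ω in B, (g ω : ℝ≥0∞) ∂P := by
  have hgm : Measurable[mΩ] g := hg.mono hL le_rfl
  have hfm : ∀ i, Measurable[mΩ] (f i) := fun i => (hfmR i).mono hR le_rfl
  have hBm : MeasurableSet[mΩ] B := hL _ hB
  have hBms : ∀ m : ℕ, MeasurableSet[mΩ] (B ∩ {ω | g ω = m}) :=
    fun m => hBm.inter (hgm (measurableSet_singleton m))
  have hBmL : ∀ m : ℕ, MeasurableSet[mL] (B ∩ {ω | g ω = m}) :=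
    fun m => MeasurableSet.inter hB (hg (measurableSet_singleton m))
  have hpt : ∀ ω, B.indicator (fun ω => ((∑ i ∈ Finset.range (g ω), f i ω : ℕ) : ℝ≥0∞)) ω
      = ∑' m : ℕ, (B ∩ {ω | g ω = m}).indicator
          (fun ω => ((∑ i ∈ Finset.range m, f i ω : ℕ) : ℝ≥0∞)) ω := by
    intro ω
    by_cases hω : ω ∈ B
    · rw [Set.indicator_of_mem hω, tsum_eq_single (g ω)]
      · rw [Set.indicator_of_mem (Set.mem_inter hω (by exact rfl))]
      · intro m hm
        exact Set.indicator_of_notMem (fun hc => hm hc.2.symm) _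
    · rw [Set.indicator_of_notMem hω]
      symm
      have hz : ∀ m : ℕ, (B ∩ {ω | g ω = m}).indicator
          (fun ω => ((∑ i ∈ Finset.range m, f i ω : ℕ) : ℝ≥0∞)) ω = 0 :=
        fun m => Set.indicator_of_notMem (fun hc => hω hc.1) _
      exact (ENNReal.summable.tsum_eq_zero_iff).mpr hz
  have hterm : ∀ m : ℕ, ∫⁻ ω in (B ∩ {ω | g ω = m}),
      ((∑ i ∈ Finset.range m, f i ω : ℕ) : ℝ≥0∞) ∂P
      = (m : ℝ≥0∞) * c * P (B ∩ {ω | g ω = m}) := by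
    intro m
    calc ∫⁻ ω in (B ∩ {ω | g ω = m}), ((∑ i ∈ Finset.range m, f i ω : ℕ) : ℝ≥0∞) ∂P
        = ∫⁻ ω in (B ∩ {ω | g ω = m}), ∑ i ∈ Finset.range m, (f i ω : ℝ≥0∞) ∂P :=
          lintegral_congr fun ω => by push_cast; rfl
      _ = ∑ i ∈ Finset.range m, ∫⁻ ω in (B ∩ {ω | g ω = m}), (f i ω : ℝ≥0∞) ∂P :=
          lintegral_finset_sum _ (fun i _ => measurable_from_top.comp (hfm i))
      _ = ∑ i ∈ Finset.range m, P (B ∩ {ω | g ω = m}) * c := by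
          refine Finset.sum_congr rfl fun i _ => ?_
          rw [@gw_indep_setLintegral Ω mΩ P ‹_› mL mR hind hL hR (B ∩ {ω | g ω = m}) (hBmL m) (f i) (hfmR i), hEf i]
      _ = (m : ℝ≥0∞) * c * P (B ∩ {ω | g ω = m}) := by
          rw [Finset.sum_const, Finset.card_range, nsmul_eq_mul]; ring
  calc ∫⁻ ω in B, ((∑ i ∈ Finset.range (g ω), f i ω : ℕ) : ℝ≥0∞) ∂P
      = ∫⁻ ω, B.indicator (fun ω => ((∑ i ∈ Finset.range (g ω), f i ω : ℕ) : ℝ≥0∞)) ω ∂P :=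
        (lintegral_indicator hBm _).symm
    _ = ∫⁻ ω, ∑' m : ℕ, (B ∩ {ω | g ω = m}).indicator
          (fun ω => ((∑ i ∈ Finset.range m, f i ω : ℕ) : ℝ≥0∞)) ω ∂P := lintegral_congr hpt
    _ = ∑' m : ℕ, ∫⁻ ω, (B ∩ {ω | g ω = m}).indicator
          (fun ω => ((∑ i ∈ Finset.range m, f i ω : ℕ) : ℝ≥0∞)) ω ∂P :=
        lintegral_tsum fun m => ((measurable_from_top.comp
          (Finset.measurable_sum _ (fun i _ => hfm i))).indicator (hBms m)).aemeasurable
    _ = ∑' m : ℕ, (m : ℝ≥0∞) * c * P (B ∩ {ω | g ω = m}) := by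
        congr 1; funext m
        rw [lintegral_indicator (hBms m), hterm m]
    _ = c * ∑' m : ℕ, (m : ℝ≥0∞) * (P.restrict B) {ω | g ω = m} := by
        rw [← ENNReal.tsum_mul_left]
        congr 1; funext m
        have hid : {ω | g ω = m} = g ⁻¹' {m} := rfl
        rw [hid, @Measure.restrict_apply Ω mΩ P _ _ (hgm (measurableSet_singleton m)),
          Set.inter_comm]
        ring
    _ = c * ∫⁻ ω in B, (g ω : ℝ≥0∞) ∂P := by
        rw [← @gw_lintegral_nat Ω mΩ (P.restrict B) g hgm]

set_option maxHeartbeats 3000000 in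
theorem gw_boettcher_upper_bound
    {Ω : Type*} [MeasurableSpace Ω] (P : Measure Ω) [IsProbabilityMeasure P]
    (p : ℕ → ℝ) (N : ℕ → ℕ → Ω → ℕ) (Z : ℕ → Ω → ℕ) (μ : ℝ)
    (hp0 : p 0 = 0) (hpnn : ∀ k, 0 ≤ p k) (hpsum : HasSum p 1)
    (hnondeg : ∀ k, p k < 1)
    (hNmeas : ∀ n i, Measurable (N n i))
    (hNdist : ∀ n i k, (P {ω | N n i ω = k}).toReal = p k)
    (hNindep : iIndepFun (fun ni : ℕ × ℕ => N ni.1 ni.2) P)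
    (hmean : HasSum (fun k : ℕ => (k : ℝ) * p k) μ) (hμ : 1 < μ)
    (hNlogN : Summable (fun k : ℕ => (k : ℝ) * Real.log k * p k))
    (hZ0 : ∀ ω, Z 0 ω = 1)
    (hZrec : ∀ n ω, Z (n + 1) ω = ∑ i ∈ Finset.range (Z n ω), N n i ω)
    (W : Ω → ℝ)
    (hW : ∀ ω, W ω = Filter.limsup (fun n => (Z n ω : ℝ) / μ ^ n) Filter.atTop)
    (hp1 : p 1 = 0) (ν : ℕ) (hν : ν = sInf {i : ℕ | p i ≠ 0}) :
    ∃ ε₀ : ℝ, 0 < ε₀ ∧ ∀ ε : ℝ, 0 < ε → ε < ε₀ →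
      -Real.log (P {ω | W ω < ε}).toReal ≤
        (-Real.log (p ν)) * (ν : ℝ) ^ 2 / ((ν : ℝ) - 1) * ε ^ (-(Real.log ν / Real.log μ) / (1 - Real.log ν / Real.log μ)) := by
  classical
  -- ## Scalar facts about ν and μ
  have hSne : {i : ℕ | p i ≠ 0}.Nonempty := by
    by_contra hc
    rw [Set.not_nonempty_iff_eq_empty] at hc
    have hz : ∀ i, p i = 0 := by
      intro i
      by_contra hi
      have : i ∈ {i : ℕ | p i ≠ 0} := hi
      simp [hc] at this
    have h0 : HasSum p 0 := by
      have : p = fun _ => (0:ℝ) := funext hz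
      rw [this]; exact hasSum_zero
    exact one_ne_zero (hpsum.unique h0)
  have hνmem : p ν ≠ 0 := by rw [hν]; exact Nat.sInf_mem hSne
  have hpν : 0 < p ν := lt_of_le_of_ne (hpnn ν) (Ne.symm hνmem)
  have hνle : ∀ k, p k ≠ 0 → ν ≤ k := fun k hk => by rw [hν]; exact Nat.sInf_le hk
  have hν2 : 2 ≤ ν := by
    by_contra h
    push_neg at h
    interval_cases ν
    · exact hνmem hp0
    · exact hνmem hp1
  have hμ0 : (0:ℝ) < μ := lt_trans one_pos hμ
  have hν0R : (0:ℝ) < (ν:ℝ) := by exact_mod_cast (by omega : 0 < ν)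
  have hν1R : (1:ℝ) < (ν:ℝ) := by exact_mod_cast (by omega : 1 < ν)
  have hμν : (ν : ℝ) < μ := by
    have hnezero : ∃ k, k ≠ ν ∧ p k ≠ 0 := by
      by_contra hcon
      push_neg at hcon
      have h1 : HasSum p (p ν) := hasSum_single ν (fun b hb => hcon b hb)
      have := hpsum.unique h1
      exact absurd this.symm (hnondeg ν).ne
    obtain ⟨k₀, hk₀ν, hk₀⟩ := hnezero
    have hk₀gt : ν < k₀ := lt_of_le_of_ne (hνle k₀ hk₀) (Ne.symm hk₀ν)
    have hsub : HasSum (fun k : ℕ => (k:ℝ) * p k - (ν:ℝ) * p k) (μ - (ν:ℝ)) := by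
      simpa using hmean.sub (hpsum.mul_left (ν:ℝ))
    have hnn : ∀ k : ℕ, 0 ≤ (k:ℝ) * p k - (ν:ℝ) * p k := by
      intro k
      by_cases hk : p k = 0
      · simp [hk]
      · have h1 : (ν:ℝ) ≤ (k:ℝ) := by exact_mod_cast hνle k hk
        nlinarith [hpnn k]
    have hle : (k₀:ℝ) * p k₀ - (ν:ℝ) * p k₀ ≤ μ - (ν:ℝ) := le_hasSum hsub k₀ (fun j _ => hnn j)
    have hpos : 0 < (k₀:ℝ) * p k₀ - (ν:ℝ) * p k₀ := by
      have hp : 0 < p k₀ := lt_of_le_of_ne (hpnn k₀) (Ne.symm hk₀)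
      have h2 : (ν:ℝ) < (k₀:ℝ) := by exact_mod_cast hk₀gt
      nlinarith
    linarith
  -- ## log constants
  have hμ1R : (0:ℝ) < Real.log μ := Real.log_pos hμ
  have hlν : 0 < Real.log ν := Real.log_pos hν1R
  have hlμν : Real.log ν < Real.log μ := Real.log_lt_log hν0R hμν
  set b : ℝ := Real.log ν / Real.log μ with hbdef
  have hb0 : 0 < b := div_pos hlν hμ1R
  have hb1 : b < 1 := (div_lt_one hμ1R).mpr hlμν
  set γ : ℝ := b / (1 - b) with hγdef
  have hγ : 0 < γ := div_pos hb0 (by linarith)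
  have hγeq : γ = Real.log ν / (Real.log μ - Real.log ν) := by
    rw [hγdef, hbdef]
    field_simp
  have hexp : -(Real.log ν / Real.log μ) / (1 - Real.log ν / Real.log μ) = -γ := by
    rw [hγdef, hbdef, neg_div]
  set c : ℝ := (ν:ℝ) ^ ((1:ℝ)/(2*γ)) with hcdef
  have hc1 : 1 < c := by
    rw [hcdef]
    exact Real.one_lt_rpow_iff_of_pos hν0R |>.mpr (Or.inl ⟨hν1R, by positivity⟩)
  have hc0 : 0 < c := lt_trans one_pos hc1
  have hcγ : c ^ (γ:ℝ) = (ν:ℝ) ^ ((1:ℝ)/2) := by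
    rw [hcdef, ← Real.rpow_mul hν0R.le]
    congr 1
    field_simp
  have hrν : ((ν:ℝ)/μ) ^ (-γ : ℝ) = (ν:ℝ) := by
    have hr0 : 0 < (ν:ℝ)/μ := div_pos hν0R hμ0
    rw [Real.rpow_def_of_pos hr0, Real.log_div hν0R.ne' hμ0.ne']
    have harith : (Real.log ν - Real.log μ) * (-γ) = Real.log ν := by
      rw [hγeq]
      have hd : Real.log μ - Real.log ν ≠ 0 := by linarith
      field_simp
      ring
    rw [harith, Real.exp_log hν0R]
  set L : ℝ := -Real.log (p ν) with hLdef
  have hL : 0 < L := neg_pos.mpr (Real.log_neg hpν (hnondeg ν))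
  have hinvc1 : 1/c < 1 := by rw [div_lt_one hc0]; exact hc1
  have hinvc0 : 0 < 1/c := by positivity
  have h1c : 0 < 1 - 1/c := by linarith
  set A : ℝ := -Real.log (1 - 1/c) with hAdef
  have hA : 0 < A := neg_pos.mpr (Real.log_neg h1c (by linarith))
  have hsqrtν : (ν:ℝ) ^ ((1:ℝ)/2) < (ν:ℝ) := by
    have := Real.rpow_lt_rpow_of_exponent_lt hν1R (by norm_num : (1:ℝ)/2 < 1)
    simpa [Real.rpow_one] using this
  have hsqrtν0 : 0 < (ν:ℝ) ^ ((1:ℝ)/2) := Real.rpow_pos_of_pos hν0R _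
  set D : ℝ := L * ((ν:ℝ)^2 - (ν:ℝ) * (ν:ℝ) ^ ((1:ℝ)/2)) / ((ν:ℝ) - 1) with hDdef
  have hD : 0 < D := by
    rw [hDdef]
    have h1 : (ν:ℝ) * (ν:ℝ) ^ ((1:ℝ)/2) < (ν:ℝ)^2 := by nlinarith
    have h2 : (0:ℝ) < (ν:ℝ) - 1 := by linarith
    have h3 : 0 < (ν:ℝ)^2 - (ν:ℝ) * (ν:ℝ) ^ ((1:ℝ)/2) := by linarith
    positivity
  refine ⟨min (1/2) ((D/A) ^ ((1:ℝ)/γ)), lt_min (by norm_num) (Real.rpow_pos_of_pos (by positivity) _), ?_⟩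
  intro ε hε hεlt
  have hεhalf : ε < 1/2 := lt_of_lt_of_le hεlt (min_le_left _ _)
  have hεDA : ε < (D/A) ^ ((1:ℝ)/γ) := lt_of_lt_of_le hεlt (min_le_right _ _)
  -- choose n
  set r : ℝ := (ν:ℝ)/μ with hrdef
  have hr0 : 0 < r := div_pos hν0R hμ0
  have hr1 : r < 1 := (div_lt_one hμ0).mpr hμν
  have hex : ∃ m : ℕ, c * r ^ m < ε := by
    have htend : Filter.Tendsto (fun m : ℕ => c * r ^ m) Filter.atTop (nhds (c * 0)) :=
      (tendsto_pow_atTop_nhds_zero_of_lt_one hr0.le hr1).const_mul c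
    rw [mul_zero] at htend
    exact (htend.eventually_lt_const hε).exists
  set n : ℕ := Nat.find hex with hndef
  have hfind : c * r ^ n < ε := Nat.find_spec hex
  have hn0 : n ≠ 0 := by
    intro h0
    have : c * r ^ n = c := by rw [h0]; simp
    rw [this] at hfind
    linarith
  have hεle : ε ≤ c * r ^ (n-1) := by
    have := Nat.find_min hex (m := n - 1) (by omega)
    linarith [not_lt.mp this]
  -- ## measurable space machinery
  set Mq : ℕ × ℕ → MeasurableSpace Ω :=
    fun q => MeasurableSpace.comap (N q.1 q.2) inferInstance with hMqdef
  have hMle : ∀ q : ℕ × ℕ, Mq q ≤ (inferInstance : MeasurableSpace Ω) :=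
    fun q => measurable_iff_comap_le.mp (hNmeas q.1 q.2)
  set Gl : ℕ → MeasurableSpace Ω :=
    fun t => ⨆ q ∈ {q : ℕ × ℕ | q.1 < t}, Mq q with hGldef
  set Gr : ℕ → MeasurableSpace Ω :=
    fun t => ⨆ q ∈ {q : ℕ × ℕ | q.1 < t}ᶜ, Mq q with hGrdef
  have hsplit : ∀ t : ℕ, Indep (Gl t) (Gr t) P :=
    fun t => ProbabilityTheory.indep_biSup_compl hMle hNindep.iIndep _
  have hGlle : ∀ t, Gl t ≤ (inferInstance : MeasurableSpace Ω) :=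
    fun t => iSup₂_le fun q _ => hMle q
  have hGrle : ∀ t, Gr t ≤ (inferInstance : MeasurableSpace Ω) :=
    fun t => iSup₂_le fun q _ => hMle q
  have hMqGl : ∀ (t : ℕ) (q : ℕ × ℕ), q.1 < t → Mq q ≤ Gl t :=
    fun t q h => le_iSup₂ (f := fun (q : ℕ × ℕ) (_ : q ∈ {q : ℕ × ℕ | q.1 < t}) => Mq q) q h
  have hMqGr : ∀ (t : ℕ) (q : ℕ × ℕ), t ≤ q.1 → Mq q ≤ Gr t :=
    fun t q h => le_iSup₂ (f := fun (q : ℕ × ℕ) (_ : q ∈ {q : ℕ × ℕ | q.1 < t}ᶜ) => Mq q) q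
      (not_lt.mpr h)
  have hGlmono : ∀ s t : ℕ, s ≤ t → Gl s ≤ Gl t := by
    intro s t hst
    exact biSup_mono (fun q (hq : q.1 < s) => lt_of_lt_of_le hq hst)
  have hNset : ∀ (q : ℕ × ℕ) (s : Set ℕ), MeasurableSet[Mq q] (N q.1 q.2 ⁻¹' s) :=
    fun q s => ⟨s, (Set.to_countable s).measurableSet, rfl⟩
  have hNmr : ∀ (t : ℕ) (q : ℕ × ℕ), t ≤ q.1 → Measurable[Gr t] (N q.1 q.2) :=
    fun t q h => measurable_iff_comap_le.mpr (hMqGr t q h)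
  -- ## the minimal-start process Y
  obtain ⟨Y, hY0, hYs⟩ : ∃ Y : ℕ → ℕ → Ω → ℕ, (∀ n ω, Y n 0 ω = ν ^ n) ∧
      ∀ n k ω, Y n (k+1) ω = ∑ i ∈ Finset.range (Y n k ω), N (n + k) i ω :=
    ⟨fun n k => Nat.rec (motive := fun _ => Ω → ℕ) (fun _ => ν ^ n)
      (fun k Yk ω => ∑ i ∈ Finset.range (Yk ω), N (n + k) i ω) k,
      fun n ω => rfl, fun n k ω => rfl⟩
  have hYmeas : ∀ (m' : MeasurableSpace Ω) (n k : ℕ),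
      (∀ q : ℕ × ℕ, n ≤ q.1 → q.1 < n + k → Mq q ≤ m') → Measurable[m'] (Y n k) := by
    intro m' n k
    induction k with
    | zero =>
      intro _
      have hconst : Y n 0 = fun _ => ν ^ n := funext (hY0 n)
      rw [hconst]
      exact measurable_const
    | succ k ih =>
      intro hq
      have hYk : Measurable[m'] (Y n k) := ih (fun q h1 h2 => hq q h1 (by omega))
      have hsum : ∀ m : ℕ, Measurable[m'] (fun ω => ∑ i ∈ Finset.range m, N (n + k) i ω) := by
        intro m
        refine Finset.measurable_sum _ fun i _ => ?_
        exact measurable_iff_comap_le.mpr (hq (n + k, i) (by omega) (by omega))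
      refine measurable_to_countable' (fun j => ?_)
      have hset : Y n (k+1) ⁻¹' {j} = ⋃ m : ℕ,
          ({ω | Y n k ω = m} ∩ {ω | ∑ i ∈ Finset.range m, N (n + k) i ω = j}) := by
        ext ω
        simp only [Set.mem_preimage, Set.mem_singleton_iff, Set.mem_iUnion, Set.mem_inter_iff,
          Set.mem_setOf_eq, hYs n k ω]
        constructor
        · intro h
          exact ⟨Y n k ω, rfl, h⟩
        · rintro ⟨m, hm1, hm2⟩
          rw [hm1]
          exact hm2
      rw [hset]
      exact MeasurableSet.iUnion fun m =>
        (hYk (measurableSet_singleton m)).inter ((hsum m) (measurableSet_singleton j))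
  have hYGr : ∀ n k, Measurable[Gr n] (Y n k) :=
    fun n k => hYmeas _ n k (fun q h1 _ => hMqGr n q h1)
  have hYGl : ∀ n k, Measurable[Gl (n+k)] (Y n k) :=
    fun n k => hYmeas _ n k (fun q _ h2 => hMqGl _ q h2)
  have hYamb : ∀ n k, Measurable (Y n k) :=
    fun n k => hYmeas _ n k (fun q _ _ => hMle q)
  -- mean of N
  have hEN : ∀ a i, ∫⁻ ω, (N a i ω : ℝ≥0∞) ∂P = ENNReal.ofReal μ := by
    intro a i
    rw [gw_lintegral_nat P (N a i) (hNmeas a i)]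
    have hPk : ∀ k : ℕ, P {ω | N a i ω = k} = ENNReal.ofReal (p k) := by
      intro k
      rw [← hNdist a i k, ENNReal.ofReal_toReal (measure_ne_top P _)]
    calc ∑' k : ℕ, (k : ℝ≥0∞) * P {ω | N a i ω = k}
        = ∑' k : ℕ, ENNReal.ofReal ((k:ℝ) * p k) := by
          congr 1; funext k
          rw [hPk k, ENNReal.ofReal_mul (Nat.cast_nonneg k), ENNReal.ofReal_natCast]
      _ = ENNReal.ofReal μ := by
          rw [← hmean.tsum_eq, ENNReal.ofReal_tsum_of_nonneg (fun k => mul_nonneg (Nat.cast_nonneg k) (hpnn k))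
            hmean.summable]
  -- one-step branching identity
  have hrec : ∀ (n k : ℕ) (B : Set Ω), MeasurableSet[Gl (n+k)] B →
      ∫⁻ ω in B, (Y n (k+1) ω : ℝ≥0∞) ∂P
        = ENNReal.ofReal μ * ∫⁻ ω in B, (Y n k ω : ℝ≥0∞) ∂P := by
    intro n k B hB
    have h1 : ∀ ω, (Y n (k+1) ω : ℝ≥0∞)
        = ((∑ i ∈ Finset.range (Y n k ω), N (n+k) i ω : ℕ) : ℝ≥0∞) :=
      fun ω => by rw [hYs n k ω]
    rw [lintegral_congr h1]
    exact @gw_branch_step Ω _ P _ (Gl (n+k)) (Gr (n+k)) (hGlle (n+k)) (hGrle (n+k))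
      (hsplit (n+k)) (fun i => N (n+k) i) (fun i => hNmr (n+k) (n+k, i) le_rfl)
      (ENNReal.ofReal μ) (fun i => hEN (n+k) i) (Y n k) (hYGl n k) B hB
  -- iterated branching identity
  have hiter : ∀ (n k j : ℕ) (B : Set Ω), MeasurableSet[Gl (n+k)] B →
      ∫⁻ ω in B, (Y n (k+j) ω : ℝ≥0∞) ∂P
        = (ENNReal.ofReal μ)^j * ∫⁻ ω in B, (Y n k ω : ℝ≥0∞) ∂P := by
    intro n k j B hB
    induction j with
    | zero => simp
    | succ j ih =>
      have hB' : MeasurableSet[Gl (n+(k+j))] B := hGlmono _ _ (by omega) _ hB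
      calc ∫⁻ ω in B, (Y n (k+(j+1)) ω : ℝ≥0∞) ∂P
          = ∫⁻ ω in B, (Y n ((k+j)+1) ω : ℝ≥0∞) ∂P := by
            rw [show k+(j+1) = (k+j)+1 by omega]
        _ = ENNReal.ofReal μ * ∫⁻ ω in B, (Y n (k+j) ω : ℝ≥0∞) ∂P := hrec n (k+j) B hB'
        _ = ENNReal.ofReal μ * ((ENNReal.ofReal μ)^j * ∫⁻ ω in B, (Y n k ω : ℝ≥0∞) ∂P) := by
            rw [ih]
        _ = (ENNReal.ofReal μ)^(j+1) * ∫⁻ ω in B, (Y n k ω : ℝ≥0∞) ∂P := by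
            rw [pow_succ]; ring
  have hEY : ∀ (n' k : ℕ), ∫⁻ ω, (Y n' k ω : ℝ≥0∞) ∂P
      = ((ν:ℝ≥0∞))^n' * (ENNReal.ofReal μ)^k := by
    intro n' k
    have h0 : ∫⁻ ω, (Y n' 0 ω : ℝ≥0∞) ∂P = ((ν:ℝ≥0∞))^n' := by
      have hc : ∀ ω : Ω, (Y n' 0 ω : ℝ≥0∞) = ((ν:ℝ≥0∞))^n' := by
        intro ω; rw [hY0 n' ω]; push_cast; rfl
      rw [lintegral_congr hc, lintegral_const, measure_univ, mul_one]
    have := hiter n' 0 k Set.univ MeasurableSet.univ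
    rw [Measure.restrict_univ] at this
    simp only [Nat.zero_add] at this
    rw [this, h0]
    ring
  -- ## Doob-type maximal inequality
  have hdoob : ∀ (n' : ℕ) (t : ℝ), 0 < t →
      ENNReal.ofReal t * P (⋃ k : ℕ, {ω | t * μ ^ k ≤ (Y n' k ω : ℝ)})
        ≤ ((ν:ℝ≥0∞))^n' := by
    intro n' t ht
    set Dk : ℕ → Set Ω := fun k => {ω | t * μ ^ k ≤ (Y n' k ω : ℝ)} with hDkdef
    have hDset : ∀ k, Dk k = Y n' k ⁻¹' {m : ℕ | t * μ ^ k ≤ (m:ℝ)} := fun k => rfl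
    have hDGl : ∀ k, MeasurableSet[Gl (n'+k)] (Dk k) := by
      intro k
      rw [hDset k]
      exact hYGl n' k (Set.to_countable _).measurableSet
    have hDamb : ∀ k, MeasurableSet (Dk k) := by
      intro k
      rw [hDset k]
      exact hYamb n' k (Set.to_countable _).measurableSet
    set Fk : ℕ → Set Ω := fun k => Dk k ∩ ⋂ j, ⋂ (_ : j < k), (Dk j)ᶜ with hFkdef
    have hFGl : ∀ k, MeasurableSet[Gl (n'+k)] (Fk k) := by
      intro k
      refine (hDGl k).inter ?_
      refine MeasurableSet.iInter fun j => MeasurableSet.iInter fun hj => ?_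
      exact (hGlmono (n'+j) (n'+k) (by omega) _ (hDGl j)).compl
    have hFamb : ∀ k, MeasurableSet (Fk k) := fun k => hGlle _ _ (hFGl k)
    have hFD : ∀ k, Fk k ⊆ Dk k := fun k => Set.inter_subset_left
    have hFdisj : ∀ a b : ℕ, a < b → ∀ ω, ω ∈ Fk a → ω ∈ Fk b → False := by
      intro a b hab ω ha hb
      have h1 : ω ∈ (Dk a)ᶜ := by
        have := hb.2
        simp only [Set.mem_iInter] at this
        exact this a hab
      exact h1 (hFD a ha)
    have hFDun : ∀ m : ℕ, ⋃ k ∈ Finset.range (m+1), Fk k = ⋃ k ∈ Finset.range (m+1), Dk k := by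
      intro m
      apply Set.Subset.antisymm
      · exact Set.iUnion₂_mono fun k _ => hFD k
      · intro ω hω
        rw [Set.mem_iUnion₂] at hω
        obtain ⟨k, hkm, hk⟩ := hω
        have hexk : ∃ j, ω ∈ Dk j := ⟨k, hk⟩
        set j₀ := Nat.find hexk with hj₀def
        have hj₀k : j₀ ≤ k := Nat.find_le hk
        rw [Set.mem_iUnion₂]
        refine ⟨j₀, ?_, ?_⟩
        · simp only [Finset.mem_range] at hkm ⊢
          omega
        · refine ⟨Nat.find_spec hexk, ?_⟩
          simp only [Set.mem_iInter]
          intro j hj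
          exact Nat.find_min hexk hj
    -- Doob bound at finite horizon
    have hstage : ∀ m : ℕ, ENNReal.ofReal t * P (⋃ k ∈ Finset.range (m+1), Dk k)
        ≤ ((ν:ℝ≥0∞))^n' := by
      intro m
      have hterm : ∀ k, k ≤ m → ENNReal.ofReal t * (ENNReal.ofReal μ)^m * P (Fk k)
          ≤ ∫⁻ ω in Fk k, (Y n' m ω : ℝ≥0∞) ∂P := by
        intro k hkm
        have hlow : ENNReal.ofReal (t * μ ^ k) * P (Fk k)
            ≤ ∫⁻ ω in Fk k, (Y n' k ω : ℝ≥0∞) ∂P := by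
          have hconst : ENNReal.ofReal (t * μ ^ k) * P (Fk k)
              = ∫⁻ _ in Fk k, ENNReal.ofReal (t * μ ^ k) ∂P := by
            rw [setLIntegral_const]
          rw [hconst]
          refine setLIntegral_mono (measurable_from_top.comp (hYamb n' k)) ?_
          intro ω hω
          have hωD : ω ∈ Dk k := hFD k hω
          have : t * μ ^ k ≤ (Y n' k ω : ℝ) := hωD
          calc ENNReal.ofReal (t * μ ^ k) ≤ ENNReal.ofReal ((Y n' k ω : ℝ)) :=
                ENNReal.ofReal_le_ofReal this
            _ = (Y n' k ω : ℝ≥0∞) := ENNReal.ofReal_natCast _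
        have hiterk := hiter n' k (m - k) (Fk k) (hFGl k)
        rw [show k + (m - k) = m by omega] at hiterk
        calc ENNReal.ofReal t * (ENNReal.ofReal μ)^m * P (Fk k)
            = (ENNReal.ofReal μ)^(m-k) * (ENNReal.ofReal (t * μ ^ k) * P (Fk k)) := by
              rw [ENNReal.ofReal_mul ht.le, ENNReal.ofReal_pow hμ0.le]
              rw [show m = (m - k) + k by omega]
              ring_nf
              rw [show m - k + k - k = m - k by omega]
              ring
          _ ≤ (ENNReal.ofReal μ)^(m-k) * ∫⁻ ω in Fk k, (Y n' k ω : ℝ≥0∞) ∂P :=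
              mul_le_mul_right hlow _
          _ = ∫⁻ ω in Fk k, (Y n' m ω : ℝ≥0∞) ∂P := hiterk.symm
      -- sum over k
      have hsum1 : ∑ k ∈ Finset.range (m+1), ∫⁻ ω in Fk k, (Y n' m ω : ℝ≥0∞) ∂P
          ≤ ∫⁻ ω, (Y n' m ω : ℝ≥0∞) ∂P := by
        have hind : ∀ k, ∫⁻ ω in Fk k, (Y n' m ω : ℝ≥0∞) ∂P
            = ∫⁻ ω, (Fk k).indicator (fun ω => (Y n' m ω : ℝ≥0∞)) ω ∂P := by
          intro k
          rw [lintegral_indicator (hFamb k)]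
        calc ∑ k ∈ Finset.range (m+1), ∫⁻ ω in Fk k, (Y n' m ω : ℝ≥0∞) ∂P
            = ∫⁻ ω, ∑ k ∈ Finset.range (m+1),
                (Fk k).indicator (fun ω => (Y n' m ω : ℝ≥0∞)) ω ∂P := by
              rw [lintegral_finset_sum]
              · exact Finset.sum_congr rfl fun k _ => hind k
              · exact fun k _ =>
                  (measurable_from_top.comp (hYamb n' m)).indicator (hFamb k)
          _ ≤ ∫⁻ ω, (Y n' m ω : ℝ≥0∞) ∂P := by
              refine lintegral_mono fun ω => ?_
              by_cases hex2 : ∃ k, k ∈ Finset.range (m+1) ∧ ω ∈ Fk k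
              · obtain ⟨k₀, hk₀m, hk₀⟩ := hex2
                rw [Finset.sum_eq_single k₀]
                · rw [Set.indicator_of_mem hk₀]
                · intro b hb hne
                  refine Set.indicator_of_notMem (fun hωb => ?_) _
                  rcases lt_or_gt_of_ne hne with h | h
                  · exact hFdisj b k₀ h ω hωb hk₀
                  · exact hFdisj k₀ b h ω hk₀ hωb
                · intro hcon; exact absurd hk₀m hcon
              · push_neg at hex2
                have hz : ∀ k ∈ Finset.range (m+1),
                    (Fk k).indicator (fun ω => (Y n' m ω : ℝ≥0∞)) ω = 0 :=
                  fun k hk => Set.indicator_of_notMem (hex2 k hk) _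
                rw [Finset.sum_congr rfl hz]
                simp
      have hdisjP : (↑(Finset.range (m+1)) : Set ℕ).PairwiseDisjoint Fk := by
        intro a _ b _ hab
        refine Set.disjoint_left.mpr fun ω hωa hωb => ?_
        rcases lt_or_gt_of_ne hab with h | h
        · exact hFdisj a b h ω hωa hωb
        · exact hFdisj b a h ω hωb hωa
      have hPU : P (⋃ k ∈ Finset.range (m+1), Fk k) = ∑ k ∈ Finset.range (m+1), P (Fk k) :=
        measure_biUnion_finset hdisjP fun k _ => hFamb k
      have hchain : ENNReal.ofReal t * (ENNReal.ofReal μ)^m * P (⋃ k ∈ Finset.range (m+1), Dk k)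
          ≤ ((ν:ℝ≥0∞))^n' * (ENNReal.ofReal μ)^m := by
        rw [← hFDun m, hPU, Finset.mul_sum]
        calc ∑ k ∈ Finset.range (m+1), ENNReal.ofReal t * (ENNReal.ofReal μ)^m * P (Fk k)
            ≤ ∑ k ∈ Finset.range (m+1), ∫⁻ ω in Fk k, (Y n' m ω : ℝ≥0∞) ∂P :=
              Finset.sum_le_sum fun k hk => hterm k (by
                simp only [Finset.mem_range] at hk; omega)
          _ ≤ ∫⁻ ω, (Y n' m ω : ℝ≥0∞) ∂P := hsum1
          _ = ((ν:ℝ≥0∞))^n' * (ENNReal.ofReal μ)^m := hEY n' m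
      have hμpow0 : (ENNReal.ofReal μ)^m ≠ 0 := by
        apply pow_ne_zero
        simp only [ne_eq, ENNReal.ofReal_eq_zero, not_le]
        exact hμ0
      have hμpowtop : (ENNReal.ofReal μ)^m ≠ ⊤ := by
        exact ENNReal.pow_ne_top ENNReal.ofReal_ne_top
      have := (ENNReal.mul_le_mul_iff_left hμpow0 hμpowtop).mp (by
        calc ENNReal.ofReal t * P (⋃ k ∈ Finset.range (m+1), Dk k) * (ENNReal.ofReal μ)^m
            = ENNReal.ofReal t * (ENNReal.ofReal μ)^m * P (⋃ k ∈ Finset.range (m+1), Dk k) := by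
              ring
          _ ≤ ((ν:ℝ≥0∞))^n' * (ENNReal.ofReal μ)^m := hchain)
      exact this
    -- pass to the limit
    have hUeq : (⋃ k : ℕ, Dk k) = ⋃ m : ℕ, ⋃ k ∈ Finset.range (m+1), Dk k := by
      apply Set.Subset.antisymm
      · intro ω hω
        obtain ⟨k, hk⟩ := Set.mem_iUnion.mp hω
        exact Set.mem_iUnion.mpr ⟨k, Set.mem_iUnion₂.mpr ⟨k, Finset.mem_range.mpr (by omega), hk⟩⟩
      · intro ω hω
        obtain ⟨m, hm⟩ := Set.mem_iUnion.mp hω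
        obtain ⟨k, _, hk⟩ := Set.mem_iUnion₂.mp hm
        exact Set.mem_iUnion.mpr ⟨k, hk⟩
    have hmono : Monotone (fun m : ℕ => ⋃ k ∈ Finset.range (m+1), Dk k) := by
      intro a b hab
      refine Set.iUnion₂_subset fun k hk => ?_
      refine Set.subset_iUnion₂ (s := fun k _ => Dk k) k ?_
      simp only [Finset.mem_range] at hk ⊢
      omega
    have hPlim : P (⋃ k : ℕ, Dk k) = ⨆ m : ℕ, P (⋃ k ∈ Finset.range (m+1), Dk k) := by
      rw [hUeq]
      exact hmono.directed_le.measure_iUnion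
    rw [hPlim, ENNReal.mul_iSup]
    exact iSup_le fun m => hstage m
  -- ## the minimal tree event
  set T : Finset (ℕ × ℕ) :=
    (Finset.range n).biUnion (fun m => (Finset.range (ν^m)).image (fun i => (m, i))) with hTdef
  have hTmem : ∀ q : ℕ × ℕ, q ∈ T ↔ q.1 < n ∧ q.2 < ν ^ q.1 := by
    intro q
    simp only [hTdef, Finset.mem_biUnion, Finset.mem_range, Finset.mem_image]
    constructor
    · rintro ⟨m, hm, i, hi, rfl⟩
      exact ⟨hm, hi⟩
    · rintro ⟨h1, h2⟩
      exact ⟨q.1, h1, q.2, h2, rfl⟩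
  have hTcard : T.card = ∑ m ∈ Finset.range n, ν ^ m := by
    rw [hTdef, Finset.card_biUnion]
    · refine Finset.sum_congr rfl fun m _ => ?_
      rw [Finset.card_image_of_injective _ (fun a b h => by simpa using congrArg Prod.snd h),
        Finset.card_range]
    · intro a _ b _ hab
      refine Finset.disjoint_left.mpr fun q hqa hqb => ?_
      obtain ⟨i, _, rfl⟩ := Finset.mem_image.mp hqa
      obtain ⟨j, _, hj⟩ := Finset.mem_image.mp hqb
      have hba : b = a := by simpa using congrArg Prod.fst hj
      exact hab hba.symm
  set An : Set Ω := ⋂ q ∈ T, (N q.1 q.2 ⁻¹' {ν}) with hAndef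
  have hPAn : P An = ENNReal.ofReal (p ν) ^ T.card := by
    have hmeasb := hNindep.iIndep.meas_biInter (S := T)
      (s := fun q => N q.1 q.2 ⁻¹' {ν}) (fun q _ => hNset q {ν})
    rw [hAndef, hmeasb]
    have hone : ∀ q : ℕ × ℕ, P (N q.1 q.2 ⁻¹' {ν}) = ENNReal.ofReal (p ν) := by
      intro q
      have : (N q.1 q.2 ⁻¹' {ν}) = {ω | N q.1 q.2 ω = ν} := rfl
      rw [this, ← hNdist q.1 q.2 ν, ENNReal.ofReal_toReal (measure_ne_top P _)]
    rw [Finset.prod_congr rfl (fun q _ => hone q), Finset.prod_const]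
  have hAnGl : MeasurableSet[Gl n] An := by
    rw [hAndef]
    refine MeasurableSet.iInter fun q => MeasurableSet.iInter fun hq => ?_
    exact hMqGl n q ((hTmem q).mp hq).1 _ (hNset q {ν})
  have hAnmem : ∀ ω, ω ∈ An → ∀ q ∈ T, N q.1 q.2 ω = ν := by
    intro ω hω q hq
    have := Set.mem_iInter₂.mp hω q hq
    simpa using this
  have hZAn : ∀ ω, ω ∈ An → ∀ m, m ≤ n → Z m ω = ν ^ m := by
    intro ω hω m
    induction m with
    | zero => intro _; simpa using hZ0 ω
    | succ m ih =>
      intro hm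
      have hZm := ih (by omega)
      rw [hZrec m ω, hZm]
      have hval : ∀ i ∈ Finset.range (ν ^ m), N m i ω = ν := by
        intro i hi
        exact hAnmem ω hω (m, i) ((hTmem (m,i)).mpr ⟨by omega, Finset.mem_range.mp hi⟩)
      rw [Finset.sum_congr rfl hval, Finset.sum_const, Finset.card_range, smul_eq_mul, pow_succ]
  have hZYAn : ∀ ω, ω ∈ An → ∀ k, Z (n + k) ω = Y n k ω := by
    intro ω hω k
    induction k with
    | zero => rw [Nat.add_zero, hZAn ω hω n le_rfl, hY0]
    | succ k ih => rw [show n + (k+1) = (n+k)+1 by omega, hZrec (n+k) ω, ih, hYs]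
  -- ## the controlled-growth event
  set t : ℝ := c * (ν:ℝ)^n with htdef
  have ht : 0 < t := by positivity
  set Dk : ℕ → Set Ω := fun k => {ω | t * μ ^ k ≤ (Y n k ω : ℝ)} with hDkdef
  set Cs : Set Ω := (⋃ k : ℕ, Dk k)ᶜ with hCsdef
  have hDGr : ∀ k, MeasurableSet[Gr n] (Dk k) := by
    intro k
    have : Dk k = Y n k ⁻¹' {m : ℕ | t * μ ^ k ≤ (m:ℝ)} := rfl
    rw [this]
    exact hYGr n k (Set.to_countable _).measurableSet
  have hUGr : MeasurableSet[Gr n] (⋃ k : ℕ, Dk k) := MeasurableSet.iUnion fun k => hDGr k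
  have hCGr : MeasurableSet[Gr n] Cs := hUGr.compl
  have hUamb : MeasurableSet (⋃ k : ℕ, Dk k) := hGrle n _ hUGr
  have hPDk : P (⋃ k : ℕ, Dk k) ≤ ENNReal.ofReal (1/c) := by
    have hdb := hdoob n t ht
    have hsplitν : ((ν:ℝ≥0∞))^n = ENNReal.ofReal t * ENNReal.ofReal (1/c) := by
      rw [← ENNReal.ofReal_mul ht.le]
      have h1 : t * (1/c) = ((ν:ℝ))^n := by
        rw [htdef]; field_simp
      rw [h1, ← ENNReal.ofReal_natCast ν, ← ENNReal.ofReal_pow (Nat.cast_nonneg ν)]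
    have htne0 : ENNReal.ofReal t ≠ 0 := by
      simp only [ne_eq, ENNReal.ofReal_eq_zero, not_le]; exact ht
    exact (ENNReal.mul_le_mul_iff_right htne0 ENNReal.ofReal_ne_top).mp (by rw [← hsplitν]; exact hdb)
  have hPCs : 1 - ENNReal.ofReal (1/c) ≤ P Cs := by
    rw [hCsdef, prob_compl_eq_one_sub hUamb]
    exact tsub_le_tsub_left hPDk 1
  have hindepAC : P (An ∩ Cs) = P An * P Cs :=
    (Indep_iff _ _ _).mp (hsplit n) An Cs hAnGl hCGr
  -- ## inclusion into {W < ε}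
  have hcrn : t / μ ^ n < ε := by
    have heq : t / μ^n = c * r^n := by
      rw [htdef, hrdef, div_pow]
      field_simp
    rw [heq]; exact hfind
  have hsubset : An ∩ Cs ⊆ {ω | W ω < ε} := by
    rintro ω ⟨hωA, hωC⟩
    have hYb : ∀ k, (Y n k ω : ℝ) < t * μ ^ k := by
      intro k
      by_contra hcon
      push_neg at hcon
      exact hωC (Set.mem_iUnion.mpr ⟨k, hcon⟩)
    have hbound : ∀ m, n ≤ m → (Z m ω : ℝ) / μ ^ m ≤ t / μ ^ n := by
      intro m hm
      have hZm : (Z m ω : ℝ) = (Y n (m-n) ω : ℝ) := by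
        have hzy := hZYAn ω hωA (m - n)
        rw [show n + (m - n) = m by omega] at hzy
        rw [hzy]
      rw [hZm, div_le_div_iff₀ (pow_pos hμ0 m) (pow_pos hμ0 n)]
      have h2 : (Y n (m-n) ω : ℝ) < t * μ^(m-n) := hYb (m-n)
      have hμm : μ ^ (m - n) * μ ^ n = μ ^ m := by
        rw [← pow_add]; congr 1; omega
      calc (Y n (m-n) ω : ℝ) * μ ^ n ≤ (t * μ^(m-n)) * μ^n :=
            mul_le_mul_of_nonneg_right h2.le (pow_pos hμ0 n).le
        _ = t * μ ^ m := by rw [mul_assoc, hμm]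
    have hWle : W ω ≤ t / μ ^ n := by
      rw [hW ω]
      refine Filter.limsup_le_of_le ?_ ?_
      · refine Filter.isCoboundedUnder_le_of_le Filter.atTop (x := 0) ?_
        intro m
        positivity
      · filter_upwards [Filter.eventually_ge_atTop n] with m hm using hbound m hm
    exact lt_of_le_of_lt hWle hcrn
  -- ## probability lower bound
  set q0 : ℝ := (p ν) ^ T.card * (1 - 1/c) with hq0def
  have hq0 : 0 < q0 := mul_pos (pow_pos hpν _) h1c
  have hlow : ENNReal.ofReal q0 ≤ P {ω | W ω < ε} := by
    have h1 : ENNReal.ofReal q0 ≤ P An * P Cs := by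
      rw [hq0def, ENNReal.ofReal_mul (pow_nonneg hpν.le _), hPAn]
      refine mul_le_mul' ?_ ?_
      · rw [ENNReal.ofReal_pow hpν.le]
      · rw [ENNReal.ofReal_sub _ hinvc0.le, ENNReal.ofReal_one]
        exact hPCs
    calc ENNReal.ofReal q0 ≤ P An * P Cs := h1
      _ = P (An ∩ Cs) := hindepAC.symm
      _ ≤ P {ω | W ω < ε} := measure_mono hsubset
  have htoReal : q0 ≤ (P {ω | W ω < ε}).toReal := by
    have h2 : (ENNReal.ofReal q0).toReal ≤ (P {ω | W ω < ε}).toReal :=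
      ENNReal.toReal_mono (measure_ne_top P _) hlow
    rwa [ENNReal.toReal_ofReal hq0.le] at h2
  have hlogstep : -Real.log ((P {ω | W ω < ε}).toReal) ≤ (T.card : ℝ) * L + A := by
    have hlog1 : Real.log q0 ≤ Real.log ((P {ω | W ω < ε}).toReal) :=
      Real.log_le_log hq0 htoReal
    have hlogq0 : Real.log q0 = (T.card:ℝ) * Real.log (p ν) + Real.log (1 - 1/c) := by
      rw [hq0def, Real.log_mul (pow_ne_zero _ hpν.ne') h1c.ne', Real.log_pow]
    calc -Real.log ((P {ω | W ω < ε}).toReal) ≤ -Real.log q0 := neg_le_neg hlog1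
      _ = (T.card:ℝ) * L + A := by rw [hlogq0, hLdef, hAdef]; ring
  -- ## the rpow calculus
  have hεneg : (0:ℝ) < ε ^ (-γ : ℝ) := Real.rpow_pos_of_pos hε _
  have hpow1 : ((ν:ℝ))^(n-1) ≤ c ^ (γ:ℝ) * ε ^ (-γ:ℝ) := by
    have h1 : ((ν:ℝ))^(n-1) = ((r:ℝ)^(n-1)) ^ (-γ:ℝ) := by
      rw [← hrν, ← Real.rpow_natCast (((ν:ℝ)/μ) ^ (-γ:ℝ)) (n-1), ← Real.rpow_mul hr0.le,
        mul_comm, Real.rpow_mul hr0.le, Real.rpow_natCast]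
    have h2 : ε/c ≤ r^(n-1) := (div_le_iff₀ hc0).mpr (by linarith only [hεle])
    have h3 : ((r:ℝ)^(n-1)) ^ (-γ:ℝ) ≤ (ε/c) ^ (-γ:ℝ) :=
      Real.rpow_le_rpow_of_nonpos (div_pos hε hc0) h2 (neg_nonpos.mpr hγ.le)
    have h4 : (ε/c) ^ (-γ:ℝ) = c ^ (γ:ℝ) * ε ^ (-γ:ℝ) := by
      rw [div_eq_mul_inv, Real.mul_rpow hε.le (inv_nonneg.mpr hc0.le),
        Real.inv_rpow hc0.le, Real.rpow_neg hc0.le, inv_inv, mul_comm]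
    calc ((ν:ℝ))^(n-1) = ((r:ℝ)^(n-1)) ^ (-γ:ℝ) := h1
      _ ≤ (ε/c) ^ (-γ:ℝ) := h3
      _ = c ^ (γ:ℝ) * ε ^ (-γ:ℝ) := h4
  have hνn_le : ((ν:ℝ))^n ≤ (ν:ℝ) * ((ν:ℝ))^(n-1) := by
    have h : ((ν:ℝ))^n = ((ν:ℝ))^(n-1) * (ν:ℝ) := by
      rw [← pow_succ]
      congr 1
      omega
    rw [h]
    exact (mul_comm _ _).le
  have hSn : (T.card : ℝ) ≤ ((ν:ℝ))^n / ((ν:ℝ) - 1) := by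
    have hcast : (T.card : ℝ) = ∑ m ∈ Finset.range n, ((ν:ℝ))^m := by
      rw [hTcard]; push_cast; rfl
    rw [hcast, geom_sum_eq hν1R.ne' n]
    gcongr
    · linarith only [hν1R]
  have hApart : A ≤ D * ε ^ (-γ:ℝ) := by
    have hDA : 0 < D / A := div_pos hD hA
    have hεγlt : ε ^ (γ:ℝ) < D / A := by
      have h5 := Real.rpow_lt_rpow hε.le hεDA hγ
      rwa [← Real.rpow_mul hDA.le, one_div, inv_mul_cancel₀ hγ.ne', Real.rpow_one] at h5
    have hεγ0 : 0 < ε ^ (γ:ℝ) := Real.rpow_pos_of_pos hε _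
    have h6 : A * ε ^ (γ:ℝ) ≤ D := by
      have hlt := mul_lt_mul_of_pos_left hεγlt hA
      have hAD : A * (D / A) = D := by field_simp
      rw [hAD] at hlt
      exact hlt.le
    rw [Real.rpow_neg hε.le, ← div_eq_mul_inv, le_div_iff₀ hεγ0]
    exact h6
  -- ## final assembly
  have hgoalexp : -b / (1 - b) = -γ := by rw [hγdef]; ring
  rw [hgoalexp]
  have hchain : (T.card:ℝ) * L + A ≤ L * (ν:ℝ)^2 / ((ν:ℝ)-1) * ε ^ (-γ:ℝ) := by
    have hb1 : (T.card:ℝ) ≤ ((ν:ℝ) * (c^(γ:ℝ) * ε^(-γ:ℝ))) / ((ν:ℝ)-1) := by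
      refine le_trans hSn ?_
      gcongr
      · exact hνn_le.trans (mul_le_mul_of_nonneg_left hpow1 hν0R.le)
    have hs1 : (T.card:ℝ) * L ≤ L * ((ν:ℝ) * (c^(γ:ℝ) * ε^(-γ:ℝ))) / ((ν:ℝ)-1) := by
      calc (T.card:ℝ) * L ≤ (((ν:ℝ) * (c^(γ:ℝ) * ε^(-γ:ℝ))) / ((ν:ℝ)-1)) * L :=
            mul_le_mul_of_nonneg_right hb1 hL.le
        _ = L * ((ν:ℝ) * (c^(γ:ℝ) * ε^(-γ:ℝ))) / ((ν:ℝ)-1) := by ring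
    rw [hcγ] at hs1
    have hsum : L * ((ν:ℝ) * ((ν:ℝ)^((1:ℝ)/2) * ε^(-γ:ℝ))) / ((ν:ℝ)-1) + D * ε^(-γ:ℝ)
        = L * (ν:ℝ)^2 / ((ν:ℝ)-1) * ε ^ (-γ:ℝ) := by
      rw [hDdef]
      have hne : ((ν:ℝ)-1) ≠ 0 := by linarith
      field_simp
      ring
    calc (T.card:ℝ) * L + A
        ≤ L * ((ν:ℝ) * ((ν:ℝ)^((1:ℝ)/2) * ε^(-γ:ℝ))) / ((ν:ℝ)-1) + D * ε^(-γ:ℝ) :=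
          add_le_add hs1 hApart
      _ = L * (ν:ℝ)^2 / ((ν:ℝ)-1) * ε ^ (-γ:ℝ) := hsum
  calc -Real.log ((P {ω | W ω < ε}).toReal) ≤ (T.card:ℝ)*L + A := hlogstep
    _ ≤ L * (ν:ℝ)^2/((ν:ℝ)-1) * ε ^ (-γ:ℝ) := hchain
    _ = L * (ν:ℝ)^2/((ν:ℝ)-1) * ε ^ (-γ:ℝ) := rfl
end
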